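/- arXiv:2006.09297 — 14 statements merged into one kernel-verified Lean document; each statement's English description precedes it below -/
import Mathlib

section
/- The solution map S : μ ↦ u_μ is Fréchet differentiable at μ₀, and for every direction ν ∈ ℝ^P its derivative d_ν u_{μ₀} ∈ V is the unique solution of the sensitivity equation a_{μ₀}(d_ν u_{μ₀}, v) = ∂_μ l_{μ₀}(v)·ν − ∂_μ a_{μ₀}(u_{μ₀}, v)·ν for all v ∈ V, where ∂_μ l_{μ₀}(v)·ν := Σ_ξ (∇θ^l_ξ(μ₀)·ν) l_ξ(v) and ∂_μ a_{μ₀}(u, v)·ν := Σ_ξ (∇θ^a_ξ(μ₀)·ν) a_ξ(u, v). -/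
open InnerProductSpace ContinuousLinearMap
open scoped RealInnerProductSpace

set_option maxHeartbeats 2000000
set_option synthInstance.maxHeartbeats 400000
set_option synthInstance.maxSize 1024

/-- Fréchet differentiability of the solution map `μ ↦ u_μ` at `μ₀`: the derivative in
direction `ν` is the unique solution `d_ν u_{μ₀} ∈ V` of the sensitivity equation
`a_{μ₀}(d_ν u_{μ₀}, v) = ∂_μ l_{μ₀}(v)·ν − ∂_μ a_{μ₀}(u_{μ₀}, v)·ν` for all `v ∈ V`. -/
theorem stmt_1
    {V : Type*} [NormedAddCommGroup V] [InnerProductSpace ℝ V] [CompleteSpace V]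
    {P na nl : ℕ}
    (A : Fin na → V →L[ℝ] V →L[ℝ] ℝ) (θa : Fin na → EuclideanSpace ℝ (Fin P) → ℝ)
    (L : Fin nl → V →L[ℝ] ℝ) (θl : Fin nl → EuclideanSpace ℝ (Fin P) → ℝ)
    (aμ : EuclideanSpace ℝ (Fin P) → V →L[ℝ] V →L[ℝ] ℝ)
    (haμ : ∀ μ, aμ μ = ∑ ξ : Fin na, θa ξ μ • A ξ)
    (lμ : EuclideanSpace ℝ (Fin P) → V →L[ℝ] ℝ)
    (hlμ : ∀ μ, lμ μ = ∑ ξ : Fin nl, θl ξ μ • L ξ)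
    (μ₀ : EuclideanSpace ℝ (Fin P))
    (Dθa : Fin na → EuclideanSpace ℝ (Fin P) →L[ℝ] ℝ)
    (hDθa : ∀ ξ, HasFDerivAt (θa ξ) (Dθa ξ) μ₀)
    (Dθl : Fin nl → EuclideanSpace ℝ (Fin P) →L[ℝ] ℝ)
    (hDθl : ∀ ξ, HasFDerivAt (θl ξ) (Dθl ξ) μ₀)
    (U : Set (EuclideanSpace ℝ (Fin P))) (hU : U ∈ nhds μ₀)
    (hθa_cont : ∀ ξ, ContinuousOn (θa ξ) U)
    (hθl_cont : ∀ ξ, ContinuousOn (θl ξ) U)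
    (α : ℝ) (hα : 0 < α)
    (ha_coer : ∀ μ ∈ U, ∀ v : V, α * ‖v‖ ^ 2 ≤ aμ μ v v)
    (u : EuclideanSpace ℝ (Fin P) → V)
    (hu : ∀ μ ∈ U, ∀ v : V, aμ μ (u μ) v = lμ μ v) :
    ∃ D : EuclideanSpace ℝ (Fin P) →L[ℝ] V,
      HasFDerivAt u D μ₀ ∧
      ∀ ν : EuclideanSpace ℝ (Fin P),
        (∀ v : V, aμ μ₀ (D ν) v
            = (∑ ξ : Fin nl, Dθl ξ ν * L ξ v)
              - (∑ ξ : Fin na, Dθa ξ ν * A ξ (u μ₀) v)) ∧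
        (∀ w : V,
          (∀ v : V, aμ μ₀ w v
              = (∑ ξ : Fin nl, Dθl ξ ν * L ξ v)
                - (∑ ξ : Fin na, Dθa ξ ν * A ξ (u μ₀) v)) → w = D ν) := by
  classical
  have hμ₀U : μ₀ ∈ U := mem_of_mem_nhds hU
  -- the Riesz representation map, as a continuous linear map on the dual
  set J : StrongDual ℝ V →L[ℝ] V :=
    (InnerProductSpace.toDual ℝ V).symm.toContinuousLinearEquiv.toContinuousLinearMap with hJdef
  have hJinner : ∀ (g : V →L[ℝ] ℝ) (v : V), ⟪J g, v⟫ = g v := by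
    intro g v
    exact InnerProductSpace.toDual_symm_apply
  set cJ : (V →L[ℝ] V →L[ℝ] ℝ) →L[ℝ] (V →L[ℝ] V) :=
    ContinuousLinearMap.compL ℝ V (V →L[ℝ] ℝ) V J with hcJdef
  -- the operator T μ associated to the bilinear form aμ
  set T : EuclideanSpace ℝ (Fin P) → V →L[ℝ] V := fun μ => cJ (aμ μ) with hTdef
  have hTapp : ∀ μ (w : V), T μ w = J (aμ μ w) := fun μ w => rfl
  have hTinner : ∀ μ (w v : V), ⟪T μ w, v⟫ = aμ μ w v := fun μ w v => hJinner _ v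
  -- coercivity
  have hcoer : ∀ μ ∈ U, IsCoercive (aμ μ) := by
    intro μ hμ
    refine ⟨α, hα, fun w => ?_⟩
    have := ha_coer μ hμ w
    nlinarith [this]
  -- T μ is a unit for μ ∈ U
  have hunit : ∀ μ ∈ U, IsUnit (T μ) := by
    intro μ hμ
    have h := hcoer μ hμ
    refine ⟨(ContinuousLinearEquiv.unitsEquiv ℝ V).symm h.continuousLinearEquivOfBilin, ?_⟩
    ext w
    apply ext_inner_right ℝ
    intro v
    rw [hTinner μ w v]
    exact h.continuousLinearEquivOfBilin_apply w v
  haveI : IsBoundedSMul ℝ (V →L[ℝ] V →L[ℝ] ℝ) := @NormedSpace.toIsBoundedSMul ℝ (V →L[ℝ] V →L[ℝ] ℝ) _ _ _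
  haveI : ContinuousAdd (V →L[ℝ] V →L[ℝ] ℝ) :=
    (inferInstance : IsTopologicalAddGroup (V →L[ℝ] V →L[ℝ] ℝ)).toContinuousAdd
  -- derivative of μ ↦ aμ μ
  set Da : EuclideanSpace ℝ (Fin P) →L[ℝ] (V →L[ℝ] V →L[ℝ] ℝ) :=
    ∑ ξ : Fin na, (Dθa ξ).smulRight (A ξ) with hDadef
  have hAd : HasFDerivAt aμ Da μ₀ := by
    have : HasFDerivAt (fun μ => ∑ ξ : Fin na, θa ξ μ • A ξ) Da μ₀ :=
      HasFDerivAt.fun_sum fun ξ _ => (hDθa ξ).smul_const (A ξ)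
    exact this.congr_of_eventuallyEq (Filter.Eventually.of_forall fun μ => haμ μ)
  -- derivative of μ ↦ lμ μ
  set Dl : EuclideanSpace ℝ (Fin P) →L[ℝ] (V →L[ℝ] ℝ) :=
    ∑ ξ : Fin nl, (Dθl ξ).smulRight (L ξ) with hDldef
  have hLd : HasFDerivAt lμ Dl μ₀ := by
    have : HasFDerivAt (fun μ => ∑ ξ : Fin nl, θl ξ μ • L ξ) Dl μ₀ :=
      HasFDerivAt.fun_sum fun ξ _ => (hDθl ξ).smul_const (L ξ)
    exact this.congr_of_eventuallyEq (Filter.Eventually.of_forall fun μ => hlμ μ)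
  -- derivative of T and f
  have hTd : HasFDerivAt T (cJ.comp Da) μ₀ := by
    rw [hTdef]
    have hc : HasFDerivAt (fun a => cJ a) cJ (aμ μ₀) := by
      simpa using (cJ.hasFDerivAt (x := aμ μ₀))
    refine HasFDerivAt.comp (g := fun a => cJ a) (f := aμ) μ₀ ?_ ?_
    · exact hc
    · exact hAd
  set f : EuclideanSpace ℝ (Fin P) → V := fun μ => J (lμ μ) with hfdef
  have hfd : HasFDerivAt f (J.comp Dl) μ₀ := J.hasFDerivAt.comp μ₀ hLd
  -- T μ (u μ) = f μ on U
  have hTu : ∀ μ ∈ U, T μ (u μ) = f μ := by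
    intro μ hμ
    show J (aμ μ (u μ)) = J (lμ μ)
    congr 1
    exact ContinuousLinearMap.ext (hu μ hμ)
  -- u agrees with the inverse formula on U
  have hg : ∀ μ ∈ U, Ring.inverse (T μ) (f μ) = u μ := by
    intro μ hμ
    obtain ⟨x, hx⟩ := hunit μ hμ
    rw [← hx, Ring.inverse_unit, ← hTu μ hμ, ← hx]
    calc (↑x⁻¹ : V →L[ℝ] V) ((↑x : V →L[ℝ] V) (u μ))
        = ((↑x⁻¹ * ↑x : V →L[ℝ] V)) (u μ) := rfl
      _ = u μ := by rw [x.inv_mul]; rfl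
  -- differentiability of u at μ₀
  obtain ⟨x₀, hx₀⟩ := hunit μ₀ hμ₀U
  have h1 : HasFDerivAt (Ring.inverse : (V →L[ℝ] V) → V →L[ℝ] V)
      (-((ContinuousLinearMap.mulLeftRight ℝ (V →L[ℝ] V)) ↑x₀⁻¹ ↑x₀⁻¹)) (T μ₀) := by
    rw [← hx₀]; exact hasFDerivAt_ringInverse x₀
  have hinv := h1.comp μ₀ hTd
  obtain ⟨Dg, hgd⟩ : ∃ Dg, HasFDerivAt (fun μ => Ring.inverse (T μ) (f μ)) Dg μ₀ :=
    ⟨_, hinv.clm_apply hfd⟩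
  have huD : HasFDerivAt u Dg μ₀ := by
    apply hgd.congr_of_eventuallyEq
    filter_upwards [hU] with μ hμ
    exact (hg μ hμ).symm
  -- identify the derivative equation by differentiating T μ (u μ) = f μ
  have hTud : HasFDerivAt (fun μ => T μ (u μ))
      ((T μ₀).comp Dg + (cJ.comp Da).flip (u μ₀)) μ₀ := hTd.clm_apply huD
  have hfd2 : HasFDerivAt f ((T μ₀).comp Dg + (cJ.comp Da).flip (u μ₀)) μ₀ := by
    apply hTud.congr_of_eventuallyEq
    filter_upwards [hU] with μ hμ
    exact (hTu μ hμ).symm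
  have hkey : (T μ₀).comp Dg + (cJ.comp Da).flip (u μ₀) = J.comp Dl := hfd2.unique hfd
  refine ⟨Dg, huD, fun ν => ?_⟩
  have hkeyν : T μ₀ (Dg ν) + J ((Da ν) (u μ₀)) = J (Dl ν) := by
    have := congrArg (fun (M : EuclideanSpace ℝ (Fin P) →L[ℝ] V) => M ν) hkey
    simpa [hcJdef] using this
  have hDaν : ∀ (w v : V), (Da ν) w v = ∑ ξ : Fin na, Dθa ξ ν * A ξ w v := by
    intro w v
    rw [hDadef]
    simp [ContinuousLinearMap.sum_apply, ContinuousLinearMap.smulRight_apply]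
  have hDlν : ∀ v : V, (Dl ν) v = ∑ ξ : Fin nl, Dθl ξ ν * L ξ v := by
    intro v
    rw [hDldef]
    simp [ContinuousLinearMap.sum_apply, ContinuousLinearMap.smulRight_apply]
  have heq : ∀ v : V, aμ μ₀ (Dg ν) v
      = (∑ ξ : Fin nl, Dθl ξ ν * L ξ v) - (∑ ξ : Fin na, Dθa ξ ν * A ξ (u μ₀) v) := by
    intro v
    have h1 := congrArg (fun y : V => ⟪y, v⟫) hkeyν
    simp only [inner_add_left, hJinner] at h1
    rw [hTinner μ₀ (Dg ν) v, hDaν (u μ₀) v, hDlν v] at h1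
    linarith
  refine ⟨heq, fun w hw => ?_⟩
  have hzero : ∀ v : V, aμ μ₀ (w - Dg ν) v = 0 := by
    intro v
    have := hw v
    have h2 := heq v
    simp only [map_sub, ContinuousLinearMap.sub_apply]
    linarith
  have hc := ha_coer μ₀ hμ₀U (w - Dg ν)
  rw [hzero (w - Dg ν)] at hc
  have hsq : ‖w - Dg ν‖ ^ 2 ≤ 0 := by
    rcases le_or_gt (‖w - Dg ν‖ ^ 2) 0 with h | h
    · exact h
    · exact absurd hc (not_le.mpr (mul_pos hα h))
  have hn : ‖w - Dg ν‖ = 0 :=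
    le_antisymm (by
      have := le_antisymm hsq (sq_nonneg _)
      exact le_of_eq (pow_eq_zero_iff (n := 2) (by norm_num) |>.mp this)) (norm_nonneg _)
  exact sub_eq_zero.mp (norm_eq_zero.mp hn)
end

section
/- The dual solution map A : μ ↦ p_μ is Fréchet differentiable at μ₀, and for every direction ν ∈ ℝ^P its derivative d_ν p_{μ₀} ∈ V is the unique solution of a_{μ₀}(q, d_ν p_{μ₀}) = ∂_μ j_{μ₀}(q)·ν + 2 ∂_μ k_{μ₀}(q, u_{μ₀})·ν − ∂_μ a_{μ₀}(q, p_{μ₀})·ν + 2 k_{μ₀}(q, d_ν u_{μ₀}) for all q ∈ V, where d_ν u_{μ₀} ∈ V is the Fréchet derivative of the primal solution map at μ₀ in direction ν (the unique solution of a_{μ₀}(d_ν u_{μ₀}, v) = ∂_μ l_{μ₀}(v)·ν − ∂_μ a_{μ₀}(u_{μ₀}, v)·ν for all v ∈ V), and ∂_μ of a parameter-separable form denotes the sum of the forms' components weighted by the directional derivatives of their coefficient functions. -/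
open scoped RealInnerProductSpace


set_option maxHeartbeats 2000000 in
set_option synthInstance.maxHeartbeats 1000000 in
/-- Fréchet differentiability of the dual solution map `μ ↦ p_μ` at `μ₀`: the derivative
in direction `ν` is the unique solution `d_ν p_{μ₀} ∈ V` of
`a_{μ₀}(q, d_ν p_{μ₀}) = ∂_μ j_{μ₀}(q)·ν + 2 ∂_μ k_{μ₀}(q, u_{μ₀})·ν
  − ∂_μ a_{μ₀}(q, p_{μ₀})·ν + 2 k_{μ₀}(q, d_ν u_{μ₀})` for all `q ∈ V`, where
`d_ν u_{μ₀}` is the (unique) solution of the primal sensitivity equation. -/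
theorem stmt_2
    {V : Type*} [NormedAddCommGroup V] [InnerProductSpace ℝ V] [CompleteSpace V]
    {P na nl nj nk : ℕ}
    (A : Fin na → V →L[ℝ] V →L[ℝ] ℝ) (θa : Fin na → EuclideanSpace ℝ (Fin P) → ℝ)
    (L : Fin nl → V →L[ℝ] ℝ) (θl : Fin nl → EuclideanSpace ℝ (Fin P) → ℝ)
    (Jf : Fin nj → V →L[ℝ] ℝ) (θj : Fin nj → EuclideanSpace ℝ (Fin P) → ℝ)
    (K : Fin nk → V →L[ℝ] V →L[ℝ] ℝ) (θk : Fin nk → EuclideanSpace ℝ (Fin P) → ℝ)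
    (hK_sym : ∀ ξ (v w : V), K ξ v w = K ξ w v)
    (aμ : EuclideanSpace ℝ (Fin P) → V →L[ℝ] V →L[ℝ] ℝ)
    (haμ : ∀ μ, aμ μ = ∑ ξ : Fin na, θa ξ μ • A ξ)
    (lμ : EuclideanSpace ℝ (Fin P) → V →L[ℝ] ℝ)
    (hlμ : ∀ μ, lμ μ = ∑ ξ : Fin nl, θl ξ μ • L ξ)
    (jμ : EuclideanSpace ℝ (Fin P) → V →L[ℝ] ℝ)
    (hjμ : ∀ μ, jμ μ = ∑ ξ : Fin nj, θj ξ μ • Jf ξ)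
    (kμ : EuclideanSpace ℝ (Fin P) → V →L[ℝ] V →L[ℝ] ℝ)
    (hkμ : ∀ μ, kμ μ = ∑ ξ : Fin nk, θk ξ μ • K ξ)
    (μ₀ : EuclideanSpace ℝ (Fin P))
    (Dθa : Fin na → EuclideanSpace ℝ (Fin P) →L[ℝ] ℝ)
    (hDθa : ∀ ξ, HasFDerivAt (θa ξ) (Dθa ξ) μ₀)
    (Dθl : Fin nl → EuclideanSpace ℝ (Fin P) →L[ℝ] ℝ)
    (hDθl : ∀ ξ, HasFDerivAt (θl ξ) (Dθl ξ) μ₀)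
    (Dθj : Fin nj → EuclideanSpace ℝ (Fin P) →L[ℝ] ℝ)
    (hDθj : ∀ ξ, HasFDerivAt (θj ξ) (Dθj ξ) μ₀)
    (Dθk : Fin nk → EuclideanSpace ℝ (Fin P) →L[ℝ] ℝ)
    (hDθk : ∀ ξ, HasFDerivAt (θk ξ) (Dθk ξ) μ₀)
    (U : Set (EuclideanSpace ℝ (Fin P))) (hU : U ∈ nhds μ₀)
    (hθa_cont : ∀ ξ, ContinuousOn (θa ξ) U) (hθl_cont : ∀ ξ, ContinuousOn (θl ξ) U)
    (hθj_cont : ∀ ξ, ContinuousOn (θj ξ) U) (hθk_cont : ∀ ξ, ContinuousOn (θk ξ) U)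
    (α : ℝ) (hα : 0 < α)
    (ha_coer : ∀ μ ∈ U, ∀ v : V, α * ‖v‖ ^ 2 ≤ aμ μ v v)
    (u : EuclideanSpace ℝ (Fin P) → V)
    (hu : ∀ μ ∈ U, ∀ v : V, aμ μ (u μ) v = lμ μ v)
    (p : EuclideanSpace ℝ (Fin P) → V)
    (hp : ∀ μ ∈ U, ∀ v : V, aμ μ v (p μ) = jμ μ v + 2 * kμ μ v (u μ)) :
    ∃ D : EuclideanSpace ℝ (Fin P) →L[ℝ] V,
      HasFDerivAt p D μ₀ ∧
      ∀ ν : EuclideanSpace ℝ (Fin P), ∀ du : V,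
        (∀ v : V, aμ μ₀ du v
            = (∑ ξ : Fin nl, Dθl ξ ν * L ξ v)
              - (∑ ξ : Fin na, Dθa ξ ν * A ξ (u μ₀) v)) →
        ((∀ q : V, aμ μ₀ q (D ν)
            = (∑ ξ : Fin nj, Dθj ξ ν * Jf ξ q)
              + 2 * (∑ ξ : Fin nk, Dθk ξ ν * K ξ q (u μ₀))
              - (∑ ξ : Fin na, Dθa ξ ν * A ξ q (p μ₀))
              + 2 * kμ μ₀ q du) ∧
         (∀ w : V,
            (∀ q : V, aμ μ₀ q w
              = (∑ ξ : Fin nj, Dθj ξ ν * Jf ξ q)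
                + 2 * (∑ ξ : Fin nk, Dθk ξ ν * K ξ q (u μ₀))
                - (∑ ξ : Fin na, Dθa ξ ν * A ξ q (p μ₀))
                + 2 * kμ μ₀ q du) → w = D ν)) := by
  classical
  have hμ₀U : μ₀ ∈ U := mem_of_mem_nhds hU
  -- symmetric k
  have hk_sym : ∀ μ (v w : V), kμ μ v w = kμ μ w v := by
    intro μ v w
    rw [hkμ]
    simp only [ContinuousLinearMap.sum_apply, ContinuousLinearMap.smul_apply, smul_eq_mul]
    exact Finset.sum_congr rfl fun ξ _ => by rw [hK_sym ξ v w]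
  -- representing operators
  set Ca : Fin na → (V →L[ℝ] V) :=
    fun ξ => InnerProductSpace.continuousLinearMapOfBilin (𝕜 := ℝ) (A ξ) with hCadef
  set Ca' : Fin na → (V →L[ℝ] V) :=
    fun ξ => InnerProductSpace.continuousLinearMapOfBilin (𝕜 := ℝ) ((A ξ).flip) with hCa'def
  set Ck : Fin nk → (V →L[ℝ] V) :=
    fun ξ => InnerProductSpace.continuousLinearMapOfBilin (𝕜 := ℝ) (K ξ) with hCkdef
  set rL : Fin nl → V := fun ξ => (InnerProductSpace.toDual ℝ V).symm (L ξ) with hrLdef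
  set rJ : Fin nj → V := fun ξ => (InnerProductSpace.toDual ℝ V).symm (Jf ξ) with hrJdef
  set opA : EuclideanSpace ℝ (Fin P) → (V →L[ℝ] V) :=
    fun μ => ∑ ξ : Fin na, θa ξ μ • Ca ξ with hopAdef
  set opA' : EuclideanSpace ℝ (Fin P) → (V →L[ℝ] V) :=
    fun μ => ∑ ξ : Fin na, θa ξ μ • Ca' ξ with hopA'def
  set opK : EuclideanSpace ℝ (Fin P) → (V →L[ℝ] V) :=
    fun μ => ∑ ξ : Fin nk, θk ξ μ • Ck ξ with hopKdef
  set rl : EuclideanSpace ℝ (Fin P) → V := fun μ => ∑ ξ : Fin nl, θl ξ μ • rL ξ with hrldef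
  set rj : EuclideanSpace ℝ (Fin P) → V := fun μ => ∑ ξ : Fin nj, θj ξ μ • rJ ξ with hrjdef
  have hCa_app : ∀ ξ (v w : V), ⟪Ca ξ v, w⟫ = A ξ v w := fun ξ v w =>
    InnerProductSpace.continuousLinearMapOfBilin_apply (𝕜 := ℝ) (A ξ) v w
  have hCa'_app : ∀ ξ (w v : V), ⟪Ca' ξ w, v⟫ = A ξ v w := fun ξ w v =>
    InnerProductSpace.continuousLinearMapOfBilin_apply (𝕜 := ℝ) ((A ξ).flip) w v
  have hCk_app : ∀ ξ (w v : V), ⟪Ck ξ w, v⟫ = K ξ w v := fun ξ w v =>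
    InnerProductSpace.continuousLinearMapOfBilin_apply (𝕜 := ℝ) (K ξ) w v
  have hrL_app : ∀ ξ (v : V), ⟪rL ξ, v⟫ = L ξ v := fun ξ v =>
    InnerProductSpace.toDual_symm_apply
  have hrJ_app : ∀ ξ (v : V), ⟪rJ ξ, v⟫ = Jf ξ v := fun ξ v =>
    InnerProductSpace.toDual_symm_apply
  have hopA_app : ∀ μ (v w : V), ⟪opA μ v, w⟫ = aμ μ v w := by
    intro μ v w
    rw [haμ]
    simp [hopAdef, ContinuousLinearMap.sum_apply, ContinuousLinearMap.smul_apply,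
      sum_inner, real_inner_smul_left, hCa_app]
  have hopA'_app : ∀ μ (w v : V), ⟪opA' μ w, v⟫ = aμ μ v w := by
    intro μ w v
    rw [haμ]
    simp [hopA'def, ContinuousLinearMap.sum_apply, ContinuousLinearMap.smul_apply,
      sum_inner, real_inner_smul_left, hCa'_app]
  have hopK_app : ∀ μ (w v : V), ⟪opK μ w, v⟫ = kμ μ w v := by
    intro μ w v
    rw [hkμ]
    simp [hopKdef, ContinuousLinearMap.sum_apply, ContinuousLinearMap.smul_apply,
      sum_inner, real_inner_smul_left, hCk_app]
  have hrl_app : ∀ μ (v : V), ⟪rl μ, v⟫ = lμ μ v := by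
    intro μ v
    rw [hlμ]
    simp [hrldef, ContinuousLinearMap.sum_apply, ContinuousLinearMap.smul_apply,
      sum_inner, real_inner_smul_left, hrL_app]
  have hrj_app : ∀ μ (v : V), ⟪rj μ, v⟫ = jμ μ v := by
    intro μ v
    rw [hjμ]
    simp [hrjdef, ContinuousLinearMap.sum_apply, ContinuousLinearMap.smul_apply,
      sum_inner, real_inner_smul_left, hrJ_app]
  -- coercivity and invertibility
  have hcoer : ∀ μ ∈ U, IsCoercive (aμ μ) := by
    intro μ hμ
    exact ⟨α, hα, fun v => by
      have := ha_coer μ hμ v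
      nlinarith [sq_nonneg ‖v‖]⟩
  have hcoer' : ∀ μ ∈ U, IsCoercive (aμ μ).flip := by
    intro μ hμ
    exact ⟨α, hα, fun v => by
      have := ha_coer μ hμ v
      simp only [ContinuousLinearMap.flip_apply]
      nlinarith [sq_nonneg ‖v‖]⟩
  have hunit : ∀ μ ∈ U, IsUnit (opA μ) := by
    intro μ hμ
    refine ⟨(hcoer μ hμ).continuousLinearEquivOfBilin.toUnit, ?_⟩
    ext v
    refine ext_inner_right ℝ fun w => ?_
    rw [hopA_app]
    exact (hcoer μ hμ).continuousLinearEquivOfBilin_apply v w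
  have hunit' : ∀ μ ∈ U, IsUnit (opA' μ) := by
    intro μ hμ
    refine ⟨(hcoer' μ hμ).continuousLinearEquivOfBilin.toUnit, ?_⟩
    ext w
    refine ext_inner_right ℝ fun v => ?_
    rw [hopA'_app]
    exact (hcoer' μ hμ).continuousLinearEquivOfBilin_apply w v
  -- solution formulas
  set ut : EuclideanSpace ℝ (Fin P) → V := fun μ => Ring.inverse (opA μ) (rl μ) with hutdef
  have hopAu : ∀ μ ∈ U, opA μ (u μ) = rl μ := by
    intro μ hμ
    refine ext_inner_right ℝ fun v => ?_
    rw [hopA_app, hrl_app]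
    exact hu μ hμ v
  have hut_eq : ∀ μ ∈ U, ut μ = u μ := by
    intro μ hμ
    have h1 : ut μ = Ring.inverse (opA μ) (opA μ (u μ)) := by rw [hopAu μ hμ]
    rw [h1, ← ContinuousLinearMap.comp_apply, ← ContinuousLinearMap.mul_def,
      Ring.inverse_mul_cancel _ (hunit μ hμ), ContinuousLinearMap.one_apply]
  have hopAp : ∀ μ ∈ U, opA' μ (p μ) = rj μ + (2:ℝ) • opK μ (ut μ) := by
    intro μ hμ
    refine ext_inner_right ℝ fun v => ?_
    rw [hopA'_app, inner_add_left, hrj_app, real_inner_smul_left, hopK_app, hut_eq μ hμ,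
      hk_sym μ (u μ) v]
    exact hp μ hμ v
  set pt : EuclideanSpace ℝ (Fin P) → V :=
    fun μ => Ring.inverse (opA' μ) (rj μ + (2:ℝ) • opK μ (ut μ)) with hptdef
  have hpt_eq : ∀ μ ∈ U, pt μ = p μ := by
    intro μ hμ
    have h1 : pt μ = Ring.inverse (opA' μ) (opA' μ (p μ)) := by rw [hopAp μ hμ]
    rw [h1, ← ContinuousLinearMap.comp_apply, ← ContinuousLinearMap.mul_def,
      Ring.inverse_mul_cancel _ (hunit' μ hμ), ContinuousLinearMap.one_apply]
  -- derivatives of the data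
  set Ma : EuclideanSpace ℝ (Fin P) →L[ℝ] (V →L[ℝ] V) :=
    ∑ ξ : Fin na, (Dθa ξ).smulRight (Ca ξ) with hMadef
  set Ma' : EuclideanSpace ℝ (Fin P) →L[ℝ] (V →L[ℝ] V) :=
    ∑ ξ : Fin na, (Dθa ξ).smulRight (Ca' ξ) with hMa'def
  set Mk : EuclideanSpace ℝ (Fin P) →L[ℝ] (V →L[ℝ] V) :=
    ∑ ξ : Fin nk, (Dθk ξ).smulRight (Ck ξ) with hMkdef
  set Ml : EuclideanSpace ℝ (Fin P) →L[ℝ] V :=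
    ∑ ξ : Fin nl, (Dθl ξ).smulRight (rL ξ) with hMldef
  set Mj : EuclideanSpace ℝ (Fin P) →L[ℝ] V :=
    ∑ ξ : Fin nj, (Dθj ξ).smulRight (rJ ξ) with hMjdef
  have hMa : HasFDerivAt opA Ma μ₀ := HasFDerivAt.fun_sum fun ξ _ => (hDθa ξ).smul_const (Ca ξ)
  have hMa' : HasFDerivAt opA' Ma' μ₀ := HasFDerivAt.fun_sum fun ξ _ => (hDθa ξ).smul_const (Ca' ξ)
  have hMk : HasFDerivAt opK Mk μ₀ := HasFDerivAt.fun_sum fun ξ _ => (hDθk ξ).smul_const (Ck ξ)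
  have hMl : HasFDerivAt rl Ml μ₀ := HasFDerivAt.fun_sum fun ξ _ => (hDθl ξ).smul_const (rL ξ)
  have hMj : HasFDerivAt rj Mj μ₀ := HasFDerivAt.fun_sum fun ξ _ => (hDθj ξ).smul_const (rJ ξ)
  -- derivative of the inverses
  have hinvA : HasFDerivAt (fun μ => Ring.inverse (opA μ))
      ((-ContinuousLinearMap.mulLeftRight ℝ (V →L[ℝ] V)
        ↑(hunit μ₀ hμ₀U).unit⁻¹ ↑(hunit μ₀ hμ₀U).unit⁻¹).comp Ma) μ₀ := by
    have h := hasFDerivAt_ringInverse (𝕜 := ℝ) (hunit μ₀ hμ₀U).unit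
    rw [(hunit μ₀ hμ₀U).unit_spec] at h
    exact h.comp μ₀ hMa
  have hinvA' : HasFDerivAt (fun μ => Ring.inverse (opA' μ))
      ((-ContinuousLinearMap.mulLeftRight ℝ (V →L[ℝ] V)
        ↑(hunit' μ₀ hμ₀U).unit⁻¹ ↑(hunit' μ₀ hμ₀U).unit⁻¹).comp Ma') μ₀ := by
    have h := hasFDerivAt_ringInverse (𝕜 := ℝ) (hunit' μ₀ hμ₀U).unit
    rw [(hunit' μ₀ hμ₀U).unit_spec] at h
    exact h.comp μ₀ hMa'
  -- derivative of ut
  have hutd : ∃ Du : EuclideanSpace ℝ (Fin P) →L[ℝ] V, HasFDerivAt ut Du μ₀ :=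
    ⟨_, hinvA.clm_apply hMl⟩
  obtain ⟨Du, hDu⟩ := hutd
  -- derivative of pt
  have hrhsd : HasFDerivAt (fun μ => rj μ + (2:ℝ) • opK μ (ut μ))
      (Mj + (2:ℝ) • ((opK μ₀).comp Du + Mk.flip (ut μ₀))) μ₀ :=
    hMj.add ((hMk.clm_apply hDu).const_smul (2:ℝ))
  have hptd : ∃ Dp : EuclideanSpace ℝ (Fin P) →L[ℝ] V, HasFDerivAt pt Dp μ₀ :=
    ⟨_, hinvA'.clm_apply hrhsd⟩
  obtain ⟨Dp, hDp⟩ := hptd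
  -- eventual equalities
  have hpU : p =ᶠ[nhds μ₀] pt := Filter.eventuallyEq_of_mem hU fun μ hμ => (hpt_eq μ hμ).symm
  have hpD : HasFDerivAt p Dp μ₀ := hDp.congr_of_eventuallyEq hpU
  -- primal derivative identity
  have hFp : HasFDerivAt (fun μ => opA μ (ut μ) - rl μ)
      (((opA μ₀).comp Du + Ma.flip (ut μ₀)) - Ml) μ₀ := (hMa.clm_apply hDu).sub hMl
  have hFp0 : HasFDerivAt (fun μ => opA μ (ut μ) - rl μ)
      (0 : EuclideanSpace ℝ (Fin P) →L[ℝ] V) μ₀ := by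
    refine (hasFDerivAt_const (0 : V) μ₀).congr_of_eventuallyEq ?_
    refine Filter.eventuallyEq_of_mem hU fun μ hμ => ?_
    rw [hut_eq μ hμ, hopAu μ hμ, sub_self]
  have hkeyP : ((opA μ₀).comp Du + Ma.flip (ut μ₀)) - Ml = 0 := hFp.unique hFp0
  have hutμ₀ : ut μ₀ = u μ₀ := hut_eq μ₀ hμ₀U
  have hptμ₀ : pt μ₀ = p μ₀ := hpt_eq μ₀ hμ₀U
  -- inner product computations for the derivative operators
  have hMa_app : ∀ (ν : EuclideanSpace ℝ (Fin P)) (x v : V),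
      ⟪Ma ν x, v⟫ = ∑ ξ : Fin na, Dθa ξ ν * A ξ x v := by
    intro ν x v
    simp [hMadef, ContinuousLinearMap.sum_apply, ContinuousLinearMap.smulRight_apply,
      ContinuousLinearMap.smul_apply, sum_inner, real_inner_smul_left, hCa_app]
  have hMa'_app : ∀ (ν : EuclideanSpace ℝ (Fin P)) (x v : V),
      ⟪Ma' ν x, v⟫ = ∑ ξ : Fin na, Dθa ξ ν * A ξ v x := by
    intro ν x v
    simp [hMa'def, ContinuousLinearMap.sum_apply, ContinuousLinearMap.smulRight_apply,
      ContinuousLinearMap.smul_apply, sum_inner, real_inner_smul_left, hCa'_app]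
  have hMk_app : ∀ (ν : EuclideanSpace ℝ (Fin P)) (x v : V),
      ⟪Mk ν x, v⟫ = ∑ ξ : Fin nk, Dθk ξ ν * K ξ x v := by
    intro ν x v
    simp [hMkdef, ContinuousLinearMap.sum_apply, ContinuousLinearMap.smulRight_apply,
      ContinuousLinearMap.smul_apply, sum_inner, real_inner_smul_left, hCk_app]
  have hMl_app : ∀ (ν : EuclideanSpace ℝ (Fin P)) (v : V),
      ⟪Ml ν, v⟫ = ∑ ξ : Fin nl, Dθl ξ ν * L ξ v := by
    intro ν v
    simp [hMldef, ContinuousLinearMap.sum_apply, ContinuousLinearMap.smulRight_apply,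
      sum_inner, real_inner_smul_left, hrL_app]
  have hMj_app : ∀ (ν : EuclideanSpace ℝ (Fin P)) (v : V),
      ⟪Mj ν, v⟫ = ∑ ξ : Fin nj, Dθj ξ ν * Jf ξ v := by
    intro ν v
    simp [hMjdef, ContinuousLinearMap.sum_apply, ContinuousLinearMap.smulRight_apply,
      sum_inner, real_inner_smul_left, hrJ_app]
  -- primal sensitivity equation for Du
  have hDu_eq : ∀ (ν : EuclideanSpace ℝ (Fin P)) (v : V),
      aμ μ₀ (Du ν) v = (∑ ξ : Fin nl, Dθl ξ ν * L ξ v)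
        - (∑ ξ : Fin na, Dθa ξ ν * A ξ (u μ₀) v) := by
    intro ν v
    have h1 := congrArg (fun (T : EuclideanSpace ℝ (Fin P) →L[ℝ] V) => T ν) hkeyP
    simp only [ContinuousLinearMap.sub_apply, ContinuousLinearMap.add_apply,
      ContinuousLinearMap.comp_apply, ContinuousLinearMap.flip_apply,
      ContinuousLinearMap.zero_apply] at h1
    have h2 := congrArg (fun (x : V) => ⟪x, v⟫) h1
    simp only [inner_sub_left, inner_add_left, inner_zero_left] at h2
    rw [hopA_app, hMa_app, hMl_app, hutμ₀] at h2
    linarith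
  -- uniqueness helpers
  have hzero : ∀ w : V, (∀ v : V, aμ μ₀ w v = 0) → w = 0 := by
    intro w h
    have h1 := ha_coer μ₀ hμ₀U w
    rw [h w] at h1
    have h2 : ‖w‖ ^ 2 = 0 := le_antisymm (by nlinarith) (sq_nonneg _)
    have h3 : ‖w‖ = 0 := by
      have := sq_eq_zero_iff.mp h2
      exact this
    exact norm_eq_zero.mp h3
  have hzero' : ∀ w : V, (∀ q : V, aμ μ₀ q w = 0) → w = 0 := by
    intro w h
    have h1 := ha_coer μ₀ hμ₀U w
    rw [h w] at h1
    have h2 : ‖w‖ ^ 2 = 0 := le_antisymm (by nlinarith) (sq_nonneg _)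
    exact norm_eq_zero.mp (sq_eq_zero_iff.mp h2)
  -- dual derivative identity
  have hFd : HasFDerivAt (fun μ => opA' μ (pt μ) - (rj μ + (2:ℝ) • opK μ (ut μ)))
      (((opA' μ₀).comp Dp + Ma'.flip (pt μ₀))
        - (Mj + (2:ℝ) • ((opK μ₀).comp Du + Mk.flip (ut μ₀)))) μ₀ :=
    (hMa'.clm_apply hDp).sub hrhsd
  have hFd0 : HasFDerivAt (fun μ => opA' μ (pt μ) - (rj μ + (2:ℝ) • opK μ (ut μ)))
      (0 : EuclideanSpace ℝ (Fin P) →L[ℝ] V) μ₀ := by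
    refine (hasFDerivAt_const (0 : V) μ₀).congr_of_eventuallyEq ?_
    refine Filter.eventuallyEq_of_mem hU fun μ hμ => ?_
    rw [hpt_eq μ hμ, hopAp μ hμ, sub_self]
  have hkeyD : ((opA' μ₀).comp Dp + Ma'.flip (pt μ₀))
      - (Mj + (2:ℝ) • ((opK μ₀).comp Du + Mk.flip (ut μ₀))) = 0 := hFd.unique hFd0
  have hDp_eq : ∀ (ν : EuclideanSpace ℝ (Fin P)) (q : V),
      aμ μ₀ q (Dp ν) = (∑ ξ : Fin nj, Dθj ξ ν * Jf ξ q)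
        + 2 * (∑ ξ : Fin nk, Dθk ξ ν * K ξ q (u μ₀))
        - (∑ ξ : Fin na, Dθa ξ ν * A ξ q (p μ₀))
        + 2 * kμ μ₀ q (Du ν) := by
    intro ν q
    have h1 := congrArg (fun (T : EuclideanSpace ℝ (Fin P) →L[ℝ] V) => T ν) hkeyD
    simp only [ContinuousLinearMap.sub_apply, ContinuousLinearMap.add_apply,
      ContinuousLinearMap.comp_apply, ContinuousLinearMap.flip_apply,
      ContinuousLinearMap.smul_apply, ContinuousLinearMap.zero_apply] at h1
    have h2 := congrArg (fun (x : V) => ⟪x, q⟫) h1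
    simp only [inner_sub_left, inner_add_left, inner_zero_left, real_inner_smul_left] at h2
    rw [hopA'_app, hMa'_app, hMj_app, hopK_app, hMk_app, hutμ₀, hptμ₀] at h2
    have h3 : (∑ ξ : Fin nk, Dθk ξ ν * K ξ (u μ₀) q)
        = ∑ ξ : Fin nk, Dθk ξ ν * K ξ q (u μ₀) :=
      Finset.sum_congr rfl fun ξ _ => by rw [hK_sym]
    rw [h3] at h2
    rw [hk_sym μ₀ q (Du ν)]
    linarith
  refine ⟨Dp, hpD, ?_⟩
  intro ν du hdu
  have hdu_eq : du = Du ν := by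
    have h : ∀ v : V, aμ μ₀ (du - Du ν) v = 0 := by
      intro v
      rw [map_sub, ContinuousLinearMap.sub_apply, hdu v, hDu_eq ν v]
      ring
    have := hzero _ h
    exact sub_eq_zero.mp this
  constructor
  · intro q
    rw [hdu_eq]
    exact hDp_eq ν q
  · intro w hw
    have h : ∀ q : V, aμ μ₀ q (w - Dp ν) = 0 := by
      intro q
      rw [map_sub, hw q, hdu_eq, hDp_eq ν q]
      ring
    have := hzero' _ h
    exact sub_eq_zero.mp this
end

section
/- First-order necessary optimality conditions: let μ̄ ∈ 𝒫 be a local minimizer of Ĵ over 𝒫 (i.e. Ĵ(μ̄) ≤ Ĵ(μ) for all μ ∈ 𝒫 in some neighborhood of μ̄) and set ū := u_{μ̄}. Then there exists a unique Lagrange multiplier p̄ ∈ V satisfying the dual equation a_{μ̄}(v, p̄) = j_{μ̄}(v) + 2 k_{μ̄}(v, ū) for all v ∈ V, and the variational inequality [∇Θ(μ̄) + Σ_ξ ∇θ^j_ξ(μ̄) j_ξ(ū) + Σ_ξ ∇θ^k_ξ(μ̄) k_ξ(ū, ū) + Σ_ξ ∇θ^l_ξ(μ̄) l_ξ(p̄)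 − Σ_ξ ∇θ^a_ξ(μ̄) a_ξ(ū, p̄)] · (ν − μ̄) ≥ 0 holds for all ν ∈ 𝒫. -/
open Filter Asymptotics Topology

private lemma lineDeriv' {E : Type*} [NormedAddCommGroup E] [NormedSpace ℝ E]
    {f : E → ℝ} {U : Set E} (hU : IsOpen U) {x : E} (hx : x ∈ U)
    (hf : ContDiffOn ℝ 1 f U) (d : E) :
    HasDerivAt (fun t : ℝ => f (x + t • d)) (fderiv ℝ f x d) 0 := by
  have hdf : DifferentiableAt ℝ f x :=
    (hf.differentiableOn one_ne_zero x hx).differentiableAt (hU.mem_nhds hx)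
  have hline : HasDerivAt (fun t : ℝ => x + t • d) d 0 := by
    simpa using ((hasDerivAt_id (0 : ℝ)).smul_const d).const_add x
  have hfd : HasFDerivAt f (fderiv ℝ f x) (x + (0:ℝ) • d) := by
    simpa using hdf.hasFDerivAt
  have := hfd.comp_hasDerivAt 0 hline
  exact this

private lemma ev_bound' {g : ℝ → ℝ} {c : ℝ} (h : HasDerivAt g c 0) :
    ∃ C, 0 ≤ C ∧ ∀ᶠ t in 𝓝 (0 : ℝ), |g t - g 0| ≤ C * ‖t‖ := by
  have h2 := h.hasFDerivAt.isBigO_sub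
  rw [isBigO_iff] at h2
  obtain ⟨C, hC⟩ := h2
  refine ⟨max C 0, le_max_right _ _, ?_⟩
  filter_upwards [hC] with t ht
  have : ‖g t - g 0‖ ≤ C * ‖t - 0‖ := ht
  rw [sub_zero] at this
  calc |g t - g 0| ≤ C * ‖t‖ := this
    _ ≤ max C 0 * ‖t‖ := by
        exact mul_le_mul_of_nonneg_right (le_max_left _ _) (norm_nonneg _)

private lemma sum_ev_bound' {E : Type*} [NormedAddCommGroup E] [NormedSpace ℝ E]
    {U : Set E} (hU : IsOpen U) {μ0 : E} (hμ : μ0 ∈ U) (d : E)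
    {n : ℕ} (θ : Fin n → E → ℝ) (hθ : ∀ ξ, ContDiffOn ℝ 1 (θ ξ) U)
    {W : Type*} [NormedAddCommGroup W] [NormedSpace ℝ W] (w : Fin n → W) :
    ∃ C, 0 ≤ C ∧ ∀ᶠ t in 𝓝 (0 : ℝ),
      ‖(∑ ξ, θ ξ (μ0 + t • d) • w ξ) - ∑ ξ, θ ξ μ0 • w ξ‖ ≤ C * ‖t‖ := by
  have hb : ∀ ξ, ∃ C, 0 ≤ C ∧ ∀ᶠ t in 𝓝 (0 : ℝ),
      |θ ξ (μ0 + t • d) - θ ξ μ0| ≤ C * ‖t‖ := by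
    intro ξ
    have := ev_bound' (lineDeriv' hU hμ (hθ ξ) d)
    simpa using this
  choose C hC0 hCev using hb
  refine ⟨∑ ξ, C ξ * ‖w ξ‖, Finset.sum_nonneg fun ξ _ => mul_nonneg (hC0 ξ) (norm_nonneg _), ?_⟩
  filter_upwards [eventually_all.2 hCev] with t ht
  rw [← Finset.sum_sub_distrib]
  calc ‖∑ ξ, (θ ξ (μ0 + t • d) • w ξ - θ ξ μ0 • w ξ)‖
      ≤ ∑ ξ, ‖θ ξ (μ0 + t • d) • w ξ - θ ξ μ0 • w ξ‖ := norm_sum_le _ _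
    _ ≤ ∑ ξ, C ξ * ‖w ξ‖ * ‖t‖ := by
        refine Finset.sum_le_sum fun ξ _ => ?_
        rw [← sub_smul, norm_smul]
        have := ht ξ
        calc ‖θ ξ (μ0 + t • d) - θ ξ μ0‖ * ‖w ξ‖
            ≤ (C ξ * ‖t‖) * ‖w ξ‖ := by
              exact mul_le_mul_of_nonneg_right (by simpa [Real.norm_eq_abs] using this)
                (norm_nonneg _)
          _ = C ξ * ‖w ξ‖ * ‖t‖ := by ring
    _ = (∑ ξ, C ξ * ‖w ξ‖) * ‖t‖ := by rw [Finset.sum_mul]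

set_option maxHeartbeats 4000000 in
/-- First-order necessary optimality conditions: if `μ̄ ∈ 𝒫` is a local minimizer of the
reduced cost over `𝒫` and `ū := u_{μ̄}`, then there exists a unique Lagrange multiplier
`p̄ ∈ V` solving the dual equation `a_{μ̄}(v, p̄) = j_{μ̄}(v) + 2 k_{μ̄}(v, ū)` for all
`v ∈ V`, and the variational inequality
`[∇Θ(μ̄) + Σ_ξ ∇θ^j_ξ(μ̄) j_ξ(ū) + Σ_ξ ∇θ^k_ξ(μ̄) k_ξ(ū, ū) + Σ_ξ ∇θ^l_ξ(μ̄) l_ξ(p̄)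
 − Σ_ξ ∇θ^a_ξ(μ̄) a_ξ(ū, p̄)] · (ν − μ̄) ≥ 0` holds for all `ν ∈ 𝒫`. -/
theorem stmt_3
    {V : Type*} [NormedAddCommGroup V] [InnerProductSpace ℝ V] [CompleteSpace V]
    {P : ℕ} (μa μb : EuclideanSpace ℝ (Fin P)) (hab : ∀ i, μa i ≤ μb i)
    (Pset : Set (EuclideanSpace ℝ (Fin P)))
    (hPset : Pset = {μ : EuclideanSpace ℝ (Fin P) | ∀ i, μa i ≤ μ i ∧ μ i ≤ μb i})
    {na nl nj nk : ℕ}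
    (A : Fin na → V →L[ℝ] V →L[ℝ] ℝ) (θa : Fin na → EuclideanSpace ℝ (Fin P) → ℝ)
    (L : Fin nl → V →L[ℝ] ℝ) (θl : Fin nl → EuclideanSpace ℝ (Fin P) → ℝ)
    (Jf : Fin nj → V →L[ℝ] ℝ) (θj : Fin nj → EuclideanSpace ℝ (Fin P) → ℝ)
    (K : Fin nk → V →L[ℝ] V →L[ℝ] ℝ) (θk : Fin nk → EuclideanSpace ℝ (Fin P) → ℝ)
    (hK_sym : ∀ ξ (v w : V), K ξ v w = K ξ w v)
    (U : Set (EuclideanSpace ℝ (Fin P))) (hUopen : IsOpen U) (hPU : Pset ⊆ U)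
    (hθa : ∀ ξ, ContDiffOn ℝ 1 (θa ξ) U) (hθl : ∀ ξ, ContDiffOn ℝ 1 (θl ξ) U)
    (hθj : ∀ ξ, ContDiffOn ℝ 1 (θj ξ) U) (hθk : ∀ ξ, ContDiffOn ℝ 1 (θk ξ) U)
    (aμ : EuclideanSpace ℝ (Fin P) → V →L[ℝ] V →L[ℝ] ℝ)
    (haμ : ∀ μ, aμ μ = ∑ ξ : Fin na, θa ξ μ • A ξ)
    (lμ : EuclideanSpace ℝ (Fin P) → V →L[ℝ] ℝ)
    (hlμ : ∀ μ, lμ μ = ∑ ξ : Fin nl, θl ξ μ • L ξ)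
    (jμ : EuclideanSpace ℝ (Fin P) → V →L[ℝ] ℝ)
    (hjμ : ∀ μ, jμ μ = ∑ ξ : Fin nj, θj ξ μ • Jf ξ)
    (kμ : EuclideanSpace ℝ (Fin P) → V →L[ℝ] V →L[ℝ] ℝ)
    (hkμ : ∀ μ, kμ μ = ∑ ξ : Fin nk, θk ξ μ • K ξ)
    (ha_sym : ∀ μ ∈ U, ∀ v w : V, aμ μ v w = aμ μ w v)
    (α : EuclideanSpace ℝ (Fin P) → ℝ) (hα : ∀ μ ∈ U, 0 < α μ)
    (ha_coer : ∀ μ ∈ U, ∀ v : V, α μ * ‖v‖ ^ 2 ≤ aμ μ v v)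
    (Θ : EuclideanSpace ℝ (Fin P) → ℝ) (hΘ : ContDiffOn ℝ 1 Θ U)
    (u : EuclideanSpace ℝ (Fin P) → V)
    (hu : ∀ μ ∈ U, ∀ v : V, aμ μ (u μ) v = lμ μ v)
    (Jhat : EuclideanSpace ℝ (Fin P) → ℝ)
    (hJhat : ∀ μ, Jhat μ = Θ μ + jμ μ (u μ) + kμ μ (u μ) (u μ))
    (μbar : EuclideanSpace ℝ (Fin P)) (hμbar : μbar ∈ Pset)
    (hloc : ∃ ε > (0 : ℝ), ∀ μ ∈ Pset, ‖μ - μbar‖ < ε → Jhat μbar ≤ Jhat μ) :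
    ∃ pbar : V,
      (∀ v : V, aμ μbar v pbar = jμ μbar v + 2 * kμ μbar v (u μbar)) ∧
      (∀ p' : V,
        (∀ v : V, aμ μbar v p' = jμ μbar v + 2 * kμ μbar v (u μbar)) → p' = pbar) ∧
      (∀ ν ∈ Pset,
        0 ≤ fderiv ℝ Θ μbar (ν - μbar)
            + (∑ ξ : Fin nj, fderiv ℝ (θj ξ) μbar (ν - μbar) * Jf ξ (u μbar))
            + (∑ ξ : Fin nk, fderiv ℝ (θk ξ) μbar (ν - μbar) * K ξ (u μbar) (u μbar))
            + (∑ ξ : Fin nl, fderiv ℝ (θl ξ) μbar (ν - μbar) * L ξ pbar)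
            - (∑ ξ : Fin na, fderiv ℝ (θa ξ) μbar (ν - μbar) * A ξ (u μbar) pbar)) := by
  
  classical
  have hμU : μbar ∈ U := hPU hμbar
  have hα0 : 0 < α μbar := hα μbar hμU
  -- pointwise evaluation lemmas
  have eva : ∀ μ (v w : V), aμ μ v w = ∑ ξ, θa ξ μ * A ξ v w := fun μ v w => by
    simp [haμ, ContinuousLinearMap.sum_apply, ContinuousLinearMap.smul_apply, smul_eq_mul]
  have evl : ∀ μ (v : V), lμ μ v = ∑ ξ, θl ξ μ * L ξ v := fun μ v => by
    simp [hlμ, ContinuousLinearMap.sum_apply, ContinuousLinearMap.smul_apply, smul_eq_mul]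
  have evj : ∀ μ (v : V), jμ μ v = ∑ ξ, θj ξ μ * Jf ξ v := fun μ v => by
    simp [hjμ, ContinuousLinearMap.sum_apply, ContinuousLinearMap.smul_apply, smul_eq_mul]
  have evk : ∀ μ (v w : V), kμ μ v w = ∑ ξ, θk ξ μ * K ξ v w := fun μ v w => by
    simp [hkμ, ContinuousLinearMap.sum_apply, ContinuousLinearMap.smul_apply, smul_eq_mul]
  have hk_sym : ∀ μ (v w : V), kμ μ v w = kμ μ w v := fun μ v w => by
    rw [evk, evk]
    exact Finset.sum_congr rfl fun ξ _ => by rw [hK_sym]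
  -- coercivity
  have hcoer : IsCoercive (aμ μbar) := by
    refine ⟨α μbar, hα0, fun v => ?_⟩
    have := ha_coer μbar hμU v
    nlinarith [this]
  set ubar := u μbar with hubar
  -- the dual solution via Lax-Milgram
  set F : V →L[ℝ] ℝ := jμ μbar + (2 : ℝ) • ((kμ μbar).flip ubar) with hFdef
  have hFval : ∀ v, F v = jμ μbar v + 2 * kμ μbar v ubar := fun v => by
    simp [hFdef, ContinuousLinearMap.smul_apply, smul_eq_mul]
  set pbar : V :=
      hcoer.continuousLinearEquivOfBilin.symm ((InnerProductSpace.toDual ℝ V).symm F)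
    with hpdef
  have hdual : ∀ v : V, aμ μbar v pbar = jμ μbar v + 2 * kμ μbar v ubar := by
    intro v
    have h1 : aμ μbar pbar v = F v := by
      have e1 : (inner ℝ (hcoer.continuousLinearEquivOfBilin pbar) v : ℝ) = aμ μbar pbar v :=
        hcoer.continuousLinearEquivOfBilin_apply pbar v
      have e2 : hcoer.continuousLinearEquivOfBilin pbar
          = (InnerProductSpace.toDual ℝ V).symm F := by
        rw [hpdef]
        exact ContinuousLinearEquiv.apply_symm_apply _ _
      have e3 : (inner ℝ ((InnerProductSpace.toDual ℝ V).symm F) v : ℝ) = F v :=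
        InnerProductSpace.toDual_symm_apply
      rw [← e1, e2, e3]
    rw [ha_sym μbar hμU v pbar, h1, hFval]
  refine ⟨pbar, hdual, ?_, ?_⟩
  · -- uniqueness
    intro p' hp'
    have hz : aμ μbar (p' - pbar) (p' - pbar) = 0 := by
      have e1 : aμ μbar (p' - pbar) p' = aμ μbar (p' - pbar) pbar := by
        rw [hp' (p' - pbar), hdual (p' - pbar)]
      calc aμ μbar (p' - pbar) (p' - pbar)
          = aμ μbar (p' - pbar) p' - aμ μbar (p' - pbar) pbar := (map_sub _ _ _)
        _ = 0 := by rw [e1]; ring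
    have hc := ha_coer μbar hμU (p' - pbar)
    have h2 : ‖p' - pbar‖ ^ 2 = 0 :=
      le_antisymm (by nlinarith [hz, hc, hα0]) (by positivity)
    have hn : ‖p' - pbar‖ = 0 := pow_eq_zero_iff two_ne_zero |>.mp h2
    have : p' - pbar = 0 := norm_eq_zero.mp hn
    exact sub_eq_zero.mp this
  · -- variational inequality
    intro ν hν
    set d : EuclideanSpace ℝ (Fin P) := ν - μbar with hd
    -- eventual membership in U
    have hUev : ∀ᶠ t in 𝓝 (0 : ℝ), μbar + t • d ∈ U := by
      have hcont : ContinuousAt (fun t : ℝ => μbar + t • d) 0 := by fun_prop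
      have : μbar + (0 : ℝ) • d ∈ U := by simpa using hμU
      exact hcont.eventually_mem (hUopen.mem_nhds this)
    -- coefficient difference bounds
    obtain ⟨Ca, hCa0, hCaev'⟩ := sum_ev_bound' hUopen hμU d θa hθa A
    obtain ⟨Cl, hCl0, hClev'⟩ := sum_ev_bound' hUopen hμU d θl hθl L
    obtain ⟨Cj, hCj0, hCjev'⟩ := sum_ev_bound' hUopen hμU d θj hθj Jf
    obtain ⟨Ck, hCk0, hCkev'⟩ := sum_ev_bound' hUopen hμU d θk hθk K
    have hCaev : ∀ᶠ t in 𝓝 (0 : ℝ), ‖aμ (μbar + t • d) - aμ μbar‖ ≤ Ca * ‖t‖ := by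
      filter_upwards [hCaev'] with t ht; rw [haμ, haμ]; exact ht
    have hClev : ∀ᶠ t in 𝓝 (0 : ℝ), ‖lμ (μbar + t • d) - lμ μbar‖ ≤ Cl * ‖t‖ := by
      filter_upwards [hClev'] with t ht; rw [hlμ, hlμ]; exact ht
    have hCjev : ∀ᶠ t in 𝓝 (0 : ℝ), ‖jμ (μbar + t • d) - jμ μbar‖ ≤ Cj * ‖t‖ := by
      filter_upwards [hCjev'] with t ht; rw [hjμ, hjμ]; exact ht
    have hCkev : ∀ᶠ t in 𝓝 (0 : ℝ), ‖kμ (μbar + t • d) - kμ μbar‖ ≤ Ck * ‖t‖ := by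
      filter_upwards [hCkev'] with t ht; rw [hkμ, hkμ]; exact ht
    -- smallness of the a-perturbation
    have hsmall : ∀ᶠ t in 𝓝 (0 : ℝ), Ca * ‖t‖ ≤ α μbar / 2 := by
      have hpos : (0 : ℝ) < (α μbar / 2) / (Ca + 1) := by positivity
      filter_upwards [Metric.ball_mem_nhds (0 : ℝ) hpos] with t ht
      rw [mem_ball_zero_iff] at ht
      have h1 : Ca * ‖t‖ ≤ Ca * ((α μbar / 2) / (Ca + 1)) :=
        mul_le_mul_of_nonneg_left ht.le hCa0
      have h2 : Ca * ((α μbar / 2) / (Ca + 1)) ≤ α μbar / 2 := by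
        rw [mul_comm, div_mul_eq_mul_div, div_le_iff₀ (by positivity : (0:ℝ) < Ca + 1)]
        nlinarith [hα0, hCa0]
      linarith
    have ht1ev : ∀ᶠ t in 𝓝 (0 : ℝ), ‖t‖ ≤ 1 := by
      filter_upwards [Metric.ball_mem_nhds (0 : ℝ) one_pos] with t ht
      rw [mem_ball_zero_iff] at ht; exact ht.le
    -- bound on the state perturbation
    set Q : ℝ := Cl + Ca * ‖ubar‖ with hQdef
    have hQ0 : 0 ≤ Q := by positivity
    set M : ℝ := 2 * Q / α μbar with hMdef
    have hM0 : 0 ≤ M := by positivity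
    have hhev : ∀ᶠ t in 𝓝 (0 : ℝ), ‖u (μbar + t • d) - ubar‖ ≤ M * ‖t‖ := by
      filter_upwards [hUev, hCaev, hClev, hsmall] with t htU hδa hδl hsm
      have key : aμ μbar (u (μbar + t • d) - ubar) (u (μbar + t • d) - ubar)
          = (lμ (μbar + t • d) - lμ μbar) (u (μbar + t • d) - ubar)
          - (aμ (μbar + t • d) - aμ μbar) ubar (u (μbar + t • d) - ubar)
          - (aμ (μbar + t • d) - aμ μbar) (u (μbar + t • d) - ubar)
              (u (μbar + t • d) - ubar) := by
        have e1 := hu (μbar + t • d) htU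
        have e2 := hu μbar hμU
        simp only [ContinuousLinearMap.sub_apply, map_sub]
        linarith [e1 (u (μbar + t • d)), e1 ubar, e2 (u (μbar + t • d)), e2 ubar]
      set w : V := u (μbar + t • d) - ubar with hwdef
      have hc2 : α μbar * (‖w‖ * ‖w‖) ≤ aμ μbar w w := by
        have := ha_coer μbar hμU w; nlinarith [this]
      have bl : |(lμ (μbar + t • d) - lμ μbar) w| ≤ (Cl * ‖t‖) * ‖w‖ := by
        calc |(lμ (μbar + t • d) - lμ μbar) w|
            ≤ ‖lμ (μbar + t • d) - lμ μbar‖ * ‖w‖ :=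
              (lμ (μbar + t • d) - lμ μbar).le_opNorm w
          _ ≤ (Cl * ‖t‖) * ‖w‖ := mul_le_mul_of_nonneg_right hδl (norm_nonneg _)
      have ba1 : |(aμ (μbar + t • d) - aμ μbar) ubar w| ≤ (Ca * ‖t‖) * ‖ubar‖ * ‖w‖ := by
        calc |(aμ (μbar + t • d) - aμ μbar) ubar w|
            ≤ ‖aμ (μbar + t • d) - aμ μbar‖ * ‖ubar‖ * ‖w‖ :=
              (aμ (μbar + t • d) - aμ μbar).le_opNorm₂ ubar w
          _ ≤ (Ca * ‖t‖) * ‖ubar‖ * ‖w‖ := by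
              have h1 : ‖aμ (μbar + t • d) - aμ μbar‖ * ‖ubar‖ ≤ (Ca * ‖t‖) * ‖ubar‖ :=
                mul_le_mul_of_nonneg_right hδa (norm_nonneg _)
              exact mul_le_mul_of_nonneg_right h1 (norm_nonneg _)
      have ba2 : |(aμ (μbar + t • d) - aμ μbar) w w| ≤ (α μbar / 2) * (‖w‖ * ‖w‖) := by
        have h1 : |(aμ (μbar + t • d) - aμ μbar) w w|
            ≤ ‖aμ (μbar + t • d) - aμ μbar‖ * ‖w‖ * ‖w‖ :=
          (aμ (μbar + t • d) - aμ μbar).le_opNorm₂ w w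
        nlinarith [norm_nonneg w, norm_nonneg (aμ (μbar + t • d) - aμ μbar)]
      have hkey2 : α μbar / 2 * (‖w‖ * ‖w‖) ≤ Q * ‖t‖ * ‖w‖ := by
        have habs1 : (lμ (μbar + t • d) - lμ μbar) w ≤ |(lμ (μbar + t • d) - lμ μbar) w| :=
          le_abs_self _
        have habs2 : -(aμ (μbar + t • d) - aμ μbar) ubar w
            ≤ |(aμ (μbar + t • d) - aμ μbar) ubar w| := neg_le_abs _
        have habs3 : -(aμ (μbar + t • d) - aμ μbar) w w
            ≤ |(aμ (μbar + t • d) - aμ μbar) w w| := neg_le_abs _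
        nlinarith [key, hc2, bl, ba1, ba2]
      by_cases hw0 : ‖w‖ = 0
      · rw [hw0]; positivity
      · have hwpos : 0 < ‖w‖ := lt_of_le_of_ne (norm_nonneg _) (Ne.symm hw0)
        have h1 : α μbar / 2 * ‖w‖ ≤ Q * ‖t‖ := by nlinarith [hkey2, hwpos]
        have hM : α μbar * (M * ‖t‖) = 2 * (Q * ‖t‖) := by
          rw [hMdef]; field_simp; try ring
        have h2 : α μbar * ‖w‖ ≤ α μbar * (M * ‖t‖) := by
          calc α μbar * ‖w‖ = 2 * (α μbar / 2 * ‖w‖) := by ring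
            _ ≤ 2 * (Q * ‖t‖) :=
                mul_le_mul_of_nonneg_left h1 (by norm_num)
            _ = α μbar * (M * ‖t‖) := hM.symm
        exact le_of_mul_le_mul_left h2 hα0
    -- the smooth part G and its derivative
    set X : ℝ := fderiv ℝ Θ μbar d
        + (∑ ξ : Fin nj, fderiv ℝ (θj ξ) μbar d * Jf ξ ubar)
        + (∑ ξ : Fin nk, fderiv ℝ (θk ξ) μbar d * K ξ ubar ubar)
        + (∑ ξ : Fin nl, fderiv ℝ (θl ξ) μbar d * L ξ pbar)
        - (∑ ξ : Fin na, fderiv ℝ (θa ξ) μbar d * A ξ ubar pbar) with hXdef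
    set G : ℝ → ℝ := fun t => Θ (μbar + t • d)
        + (∑ ξ : Fin nj, θj ξ (μbar + t • d) * Jf ξ ubar)
        + (∑ ξ : Fin nk, θk ξ (μbar + t • d) * K ξ ubar ubar)
        + (∑ ξ : Fin nl, θl ξ (μbar + t • d) * L ξ pbar)
        - (∑ ξ : Fin na, θa ξ (μbar + t • d) * A ξ ubar pbar) with hGdef
    have hGderiv : HasDerivAt G X 0 := by
      have h1 := lineDeriv' hUopen hμU hΘ d
      have h2 : HasDerivAt (fun t : ℝ => ∑ ξ : Fin nj, θj ξ (μbar + t • d) * Jf ξ ubar)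
          (∑ ξ : Fin nj, fderiv ℝ (θj ξ) μbar d * Jf ξ ubar) 0 :=
        HasDerivAt.fun_sum fun ξ _ => (lineDeriv' hUopen hμU (hθj ξ) d).mul_const _
      have h3 : HasDerivAt (fun t : ℝ => ∑ ξ : Fin nk, θk ξ (μbar + t • d) * K ξ ubar ubar)
          (∑ ξ : Fin nk, fderiv ℝ (θk ξ) μbar d * K ξ ubar ubar) 0 :=
        HasDerivAt.fun_sum fun ξ _ => (lineDeriv' hUopen hμU (hθk ξ) d).mul_const _
      have h4 : HasDerivAt (fun t : ℝ => ∑ ξ : Fin nl, θl ξ (μbar + t • d) * L ξ pbar)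
          (∑ ξ : Fin nl, fderiv ℝ (θl ξ) μbar d * L ξ pbar) 0 :=
        HasDerivAt.fun_sum fun ξ _ => (lineDeriv' hUopen hμU (hθl ξ) d).mul_const _
      have h5 : HasDerivAt (fun t : ℝ => ∑ ξ : Fin na, θa ξ (μbar + t • d) * A ξ ubar pbar)
          (∑ ξ : Fin na, fderiv ℝ (θa ξ) μbar d * A ξ ubar pbar) 0 :=
        HasDerivAt.fun_sum fun ξ _ => (lineDeriv' hUopen hμU (hθa ξ) d).mul_const _
      exact (((h1.add h2).add h3).add h4).sub h5
    have hG0 : G 0 = Jhat μbar := by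
      have e0 : lμ μbar pbar = aμ μbar ubar pbar := (hu μbar hμU pbar).symm
      rw [hGdef]
      simp only [zero_smul, add_zero]
      rw [← evj μbar ubar, ← evk μbar ubar ubar, ← evl μbar pbar, ← eva μbar ubar pbar,
        hJhat, e0]
      ring
    -- the remainder identity
    have hId : ∀ t : ℝ, μbar + t • d ∈ U →
        Jhat (μbar + t • d) - G t =
          (jμ (μbar + t • d) - jμ μbar) (u (μbar + t • d) - ubar)
          + ((kμ (μbar + t • d) - kμ μbar) (u (μbar + t • d) - ubar) (u (μbar + t • d))
            + (kμ (μbar + t • d) - kμ μbar) ubar (u (μbar + t • d) - ubar))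
          + kμ μbar (u (μbar + t • d) - ubar) (u (μbar + t • d) - ubar)
          - (aμ (μbar + t • d) - aμ μbar) (u (μbar + t • d) - ubar) pbar := by
      intro t htU
      have hGt : G t = Θ (μbar + t • d) + jμ (μbar + t • d) ubar
          + kμ (μbar + t • d) ubar ubar + lμ (μbar + t • d) pbar
          - aμ (μbar + t • d) ubar pbar := by
        simp only [hGdef]
        rw [← evj (μbar + t • d) ubar, ← evk (μbar + t • d) ubar ubar,
          ← evl (μbar + t • d) pbar, ← eva (μbar + t • d) ubar pbar]
      have e1 : lμ (μbar + t • d) pbar = aμ (μbar + t • d) (u (μbar + t • d)) pbar :=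
        (hu (μbar + t • d) htU pbar).symm
      have e3 := hdual (u (μbar + t • d) - ubar)
      have e4 := hk_sym μbar ubar (u (μbar + t • d) - ubar)
      set w : V := u (μbar + t • d) - ubar with hwdef
      have e5 : u (μbar + t • d) = ubar + w := by rw [hwdef]; abel
      rw [hJhat, hGt, e1, e5]
      simp only [map_add, map_sub, ContinuousLinearMap.add_apply,
        ContinuousLinearMap.sub_apply] at *
      linarith [e3, e4]
    -- remainder bound
    set CC : ℝ := Cj * M + Ck * M * (‖ubar‖ + M) + Ck * ‖ubar‖ * M
        + ‖kμ μbar‖ * M * M + Ca * M * ‖pbar‖ with hCCdef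
    have hRem : ∀ᶠ t in 𝓝 (0 : ℝ), |Jhat (μbar + t • d) - G t| ≤ CC * ‖t‖ ^ 2 := by
      filter_upwards [hUev, hCaev, hCjev, hCkev, hhev, ht1ev] with t htU hδa hδj hδk hh ht1
      rw [hId t htU]
      set w : V := u (μbar + t • d) - ubar with hwdef
      have hwM : ‖w‖ ≤ M * ‖t‖ := hh
      have hwM1 : ‖w‖ ≤ M := by nlinarith [norm_nonneg t]
      have hx : ‖u (μbar + t • d)‖ ≤ ‖ubar‖ + M := by
        have e5 : u (μbar + t • d) = ubar + w := by rw [hwdef]; abel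
        rw [e5]
        calc ‖ubar + w‖ ≤ ‖ubar‖ + ‖w‖ := norm_add_le _ _
          _ ≤ ‖ubar‖ + M := by linarith
      have b1 : |(jμ (μbar + t • d) - jμ μbar) w| ≤ Cj * M * ‖t‖ ^ 2 := by
        have h0 : ‖(jμ (μbar + t • d) - jμ μbar) w‖
            ≤ ‖jμ (μbar + t • d) - jμ μbar‖ * ‖w‖ :=
          (jμ (μbar + t • d) - jμ μbar).le_opNorm w
        rw [Real.norm_eq_abs] at h0
        calc |(jμ (μbar + t • d) - jμ μbar) w|
            ≤ ‖jμ (μbar + t • d) - jμ μbar‖ * ‖w‖ := h0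
          _ ≤ (Cj * ‖t‖) * (M * ‖t‖) :=
              mul_le_mul hδj hwM (norm_nonneg _) (by positivity)
          _ = Cj * M * ‖t‖ ^ 2 := by ring
      have b2 : |(kμ (μbar + t • d) - kμ μbar) w (u (μbar + t • d))|
          ≤ Ck * M * (‖ubar‖ + M) * ‖t‖ ^ 2 := by
        have h0 := (kμ (μbar + t • d) - kμ μbar).le_opNorm₂ w (u (μbar + t • d))
        rw [Real.norm_eq_abs] at h0
        calc |(kμ (μbar + t • d) - kμ μbar) w (u (μbar + t • d))|
            ≤ ‖kμ (μbar + t • d) - kμ μbar‖ * ‖w‖ * ‖u (μbar + t • d)‖ := h0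
          _ ≤ ((Ck * ‖t‖) * (M * ‖t‖)) * (‖ubar‖ + M) := by
              refine mul_le_mul ?_ hx (norm_nonneg _) (by positivity)
              exact mul_le_mul hδk hwM (norm_nonneg _) (by positivity)
          _ = Ck * M * (‖ubar‖ + M) * ‖t‖ ^ 2 := by ring
      have b3 : |(kμ (μbar + t • d) - kμ μbar) ubar w| ≤ Ck * ‖ubar‖ * M * ‖t‖ ^ 2 := by
        have h0 := (kμ (μbar + t • d) - kμ μbar).le_opNorm₂ ubar w
        rw [Real.norm_eq_abs] at h0
        calc |(kμ (μbar + t • d) - kμ μbar) ubar w|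
            ≤ ‖kμ (μbar + t • d) - kμ μbar‖ * ‖ubar‖ * ‖w‖ := h0
          _ ≤ ((Ck * ‖t‖) * ‖ubar‖) * (M * ‖t‖) := by
              refine mul_le_mul ?_ hwM (norm_nonneg _) (by positivity)
              exact mul_le_mul_of_nonneg_right hδk (norm_nonneg _)
          _ = Ck * ‖ubar‖ * M * ‖t‖ ^ 2 := by ring
      have b4 : |kμ μbar w w| ≤ ‖kμ μbar‖ * M * M * ‖t‖ ^ 2 := by
        have h0 := (kμ μbar).le_opNorm₂ w w
        rw [Real.norm_eq_abs] at h0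
        calc |kμ μbar w w| ≤ ‖kμ μbar‖ * ‖w‖ * ‖w‖ := h0
          _ ≤ (‖kμ μbar‖ * (M * ‖t‖)) * (M * ‖t‖) := by
              refine mul_le_mul ?_ hwM (norm_nonneg _) (by positivity)
              exact mul_le_mul_of_nonneg_left hwM (norm_nonneg (kμ μbar))
          _ = ‖kμ μbar‖ * M * M * ‖t‖ ^ 2 := by ring
      have b5 : |(aμ (μbar + t • d) - aμ μbar) w pbar| ≤ Ca * M * ‖pbar‖ * ‖t‖ ^ 2 := by
        have h0 := (aμ (μbar + t • d) - aμ μbar).le_opNorm₂ w pbar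
        rw [Real.norm_eq_abs] at h0
        calc |(aμ (μbar + t • d) - aμ μbar) w pbar|
            ≤ ‖aμ (μbar + t • d) - aμ μbar‖ * ‖w‖ * ‖pbar‖ := h0
          _ ≤ ((Ca * ‖t‖) * (M * ‖t‖)) * ‖pbar‖ := by
              refine mul_le_mul_of_nonneg_right ?_ (norm_nonneg _)
              exact mul_le_mul hδa hwM (norm_nonneg _) (by positivity)
          _ = Ca * M * ‖pbar‖ * ‖t‖ ^ 2 := by ring
      have habs : |(jμ (μbar + t • d) - jμ μbar) w
          + ((kμ (μbar + t • d) - kμ μbar) w (u (μbar + t • d))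
            + (kμ (μbar + t • d) - kμ μbar) ubar w)
          + kμ μbar w w
          - (aμ (μbar + t • d) - aμ μbar) w pbar|
          ≤ |(jμ (μbar + t • d) - jμ μbar) w|
            + (|(kμ (μbar + t • d) - kμ μbar) w (u (μbar + t • d))|
              + |(kμ (μbar + t • d) - kμ μbar) ubar w|)
            + |kμ μbar w w|
            + |(aμ (μbar + t • d) - aμ μbar) w pbar| := by
        calc _ ≤ |(jμ (μbar + t • d) - jμ μbar) w
              + ((kμ (μbar + t • d) - kμ μbar) w (u (μbar + t • d))
                + (kμ (μbar + t • d) - kμ μbar) ubar w)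
              + kμ μbar w w| + |(aμ (μbar + t • d) - aμ μbar) w pbar| := abs_sub _ _
          _ ≤ _ := by
              have := abs_add_le ((jμ (μbar + t • d) - jμ μbar) w
                + ((kμ (μbar + t • d) - kμ μbar) w (u (μbar + t • d))
                  + (kμ (μbar + t • d) - kμ μbar) ubar w)) (kμ μbar w w)
              have h2 := abs_add_le ((jμ (μbar + t • d) - jμ μbar) w)
                ((kμ (μbar + t • d) - kμ μbar) w (u (μbar + t • d))
                  + (kμ (μbar + t • d) - kμ μbar) ubar w)
              have h3 := abs_add_le ((kμ (μbar + t • d) - kμ μbar) w (u (μbar + t • d)))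
                ((kμ (μbar + t • d) - kμ μbar) ubar w)
              linarith
      calc _ ≤ _ := habs
        _ ≤ CC * ‖t‖ ^ 2 := by rw [hCCdef]; ring_nf; ring_nf at b1 b2 b3 b4 b5; linarith
    -- tendsto of the difference quotient
    have hslope : Filter.Tendsto (fun t => (G t - G 0) / t) (𝓝[>] (0 : ℝ)) (𝓝 X) := by
      have h0 := (hasDerivAt_iff_tendsto_slope.mp hGderiv).mono_left
        (nhdsWithin_mono 0 fun x hx => ne_of_gt hx)
      refine h0.congr fun t => ?_
      rw [slope_def_field]
      rw [sub_zero]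
    have hrem0 : Filter.Tendsto (fun t => (Jhat (μbar + t • d) - G t) / t)
        (𝓝[>] (0 : ℝ)) (𝓝 0) := by
      have hbd : ∀ᶠ t in 𝓝[>] (0 : ℝ),
          ‖(Jhat (μbar + t • d) - G t) / t‖ ≤ CC * ‖t‖ := by
        filter_upwards [hRem.filter_mono nhdsWithin_le_nhds, self_mem_nhdsWithin]
          with t ht ht0
        have ht0' : (0 : ℝ) < t := ht0
        rw [Real.norm_eq_abs, abs_div]
        rw [div_le_iff₀ (by rw [abs_of_pos ht0']; exact ht0')]
        calc |Jhat (μbar + t • d) - G t| ≤ CC * ‖t‖ ^ 2 := ht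
          _ = CC * ‖t‖ * |t| := by
              rw [Real.norm_eq_abs]; ring
      have hcont : Filter.Tendsto (fun t : ℝ => CC * ‖t‖) (𝓝[>] (0 : ℝ)) (𝓝 0) := by
        have h1 : Filter.Tendsto (fun t : ℝ => CC * ‖t‖) (𝓝 0) (𝓝 (CC * ‖(0 : ℝ)‖)) :=
          (continuous_const.mul continuous_norm).tendsto 0
        simpa using h1.mono_left nhdsWithin_le_nhds
      exact squeeze_zero_norm' hbd hcont
    have hq : Filter.Tendsto (fun t => (Jhat (μbar + t • d) - Jhat μbar) / t)
        (𝓝[>] (0 : ℝ)) (𝓝 X) := by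
      have h0 := hslope.add hrem0
      rw [add_zero] at h0
      refine h0.congr fun t => ?_
      rw [← add_div]
      congr 1
      rw [hG0]
      ring
    -- eventual nonnegativity of the quotient
    obtain ⟨ε, hε, hmin⟩ := hloc
    have hev : ∀ᶠ t in 𝓝[>] (0 : ℝ), 0 ≤ (Jhat (μbar + t • d) - Jhat μbar) / t := by
      have hδpos : (0 : ℝ) < min 1 (ε / (‖d‖ + 1)) := by positivity
      have hsub : Set.Ioo (0 : ℝ) (min 1 (ε / (‖d‖ + 1))) ∈ 𝓝[>] (0 : ℝ) :=
        Ioo_mem_nhdsGT_of_mem ⟨le_refl _, hδpos⟩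
      filter_upwards [hsub] with t ht
      obtain ⟨ht0, htm⟩ := ht
      have ht1 : t ≤ 1 := le_of_lt (lt_of_lt_of_le htm (min_le_left _ _))
      have htε : t < ε / (‖d‖ + 1) := lt_of_lt_of_le htm (min_le_right _ _)
      have hPmem : μbar + t • d ∈ Pset := by
        rw [hPset]
        intro i
        have hνi : μa i ≤ ν i ∧ ν i ≤ μb i := by
          have := hν; rw [hPset] at this; exact this i
        have hμi : μa i ≤ μbar i ∧ μbar i ≤ μb i := by
          have := hμbar; rw [hPset] at this; exact this i
        have hci : (μbar + t • d) i = μbar i + t * (ν i - μbar i) := by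
          rw [hd]; simp [PiLp.add_apply, PiLp.smul_apply, PiLp.sub_apply, smul_eq_mul]
        rw [hci]
        constructor
        · nlinarith [hνi.1, hμi.1]
        · nlinarith [hνi.2, hμi.2]
      have hdist : ‖(μbar + t • d) - μbar‖ < ε := by
        have e : (μbar + t • d) - μbar = t • d := by abel
        rw [e, norm_smul, Real.norm_eq_abs, abs_of_pos ht0]
        have h1 : t * ‖d‖ ≤ t * (‖d‖ + 1) := by nlinarith
        have h2 : t * (‖d‖ + 1) < ε :=
          (lt_div_iff₀ (by positivity : (0:ℝ) < ‖d‖ + 1)).mp htε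
        linarith
      have := hmin (μbar + t • d) hPmem hdist
      exact div_nonneg (by linarith) ht0.le
    have hfinal : (0 : ℝ) ≤ X := ge_of_tendsto hq hev
    rw [hXdef] at hfinal
    exact hfinal
end

section
/- Gradient of the reduced cost functional: the function Ĵ is differentiable at μ₀ and its gradient is given componentwise, for 1 ≤ i ≤ P, by (∇Ĵ(μ₀))_i = ∂_i Θ(μ₀) + Σ_ξ ∂_i θ^j_ξ(μ₀) j_ξ(u_{μ₀}) + Σ_ξ ∂_i θ^k_ξ(μ₀) k_ξ(u_{μ₀}, u_{μ₀}) + Σ_ξ ∂_i θ^l_ξ(μ₀) l_ξ(p_{μ₀}) − Σ_ξ ∂_i θ^a_ξ(μ₀) a_ξ(u_{μ₀}, p_{μ₀}), where p_{μ₀} ∈ V is the dual solution. -/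
open RealInnerProductSpace
set_option maxHeartbeats 2000000
set_option synthInstance.maxHeartbeats 1000000


/-- Gradient of the reduced cost functional: `Ĵ` is differentiable at `μ₀` and, for each
`1 ≤ i ≤ P`,
`(∇Ĵ(μ₀))_i = ∂_i Θ(μ₀) + Σ_ξ ∂_i θ^j_ξ(μ₀) j_ξ(u_{μ₀}) + Σ_ξ ∂_i θ^k_ξ(μ₀) k_ξ(u_{μ₀}, u_{μ₀})
 + Σ_ξ ∂_i θ^l_ξ(μ₀) l_ξ(p_{μ₀}) − Σ_ξ ∂_i θ^a_ξ(μ₀) a_ξ(u_{μ₀}, p_{μ₀})`,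
where `p_{μ₀}` is the dual solution. -/
theorem stmt_4
    {V : Type*} [NormedAddCommGroup V] [InnerProductSpace ℝ V] [CompleteSpace V]
    {P na nl nj nk : ℕ}
    (A : Fin na → V →L[ℝ] V →L[ℝ] ℝ) (θa : Fin na → EuclideanSpace ℝ (Fin P) → ℝ)
    (L : Fin nl → V →L[ℝ] ℝ) (θl : Fin nl → EuclideanSpace ℝ (Fin P) → ℝ)
    (Jf : Fin nj → V →L[ℝ] ℝ) (θj : Fin nj → EuclideanSpace ℝ (Fin P) → ℝ)
    (K : Fin nk → V →L[ℝ] V →L[ℝ] ℝ) (θk : Fin nk → EuclideanSpace ℝ (Fin P) → ℝ)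
    (hK_sym : ∀ ξ (v w : V), K ξ v w = K ξ w v)
    (aμ : EuclideanSpace ℝ (Fin P) → V →L[ℝ] V →L[ℝ] ℝ)
    (haμ : ∀ μ, aμ μ = ∑ ξ : Fin na, θa ξ μ • A ξ)
    (lμ : EuclideanSpace ℝ (Fin P) → V →L[ℝ] ℝ)
    (hlμ : ∀ μ, lμ μ = ∑ ξ : Fin nl, θl ξ μ • L ξ)
    (jμ : EuclideanSpace ℝ (Fin P) → V →L[ℝ] ℝ)
    (hjμ : ∀ μ, jμ μ = ∑ ξ : Fin nj, θj ξ μ • Jf ξ)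
    (kμ : EuclideanSpace ℝ (Fin P) → V →L[ℝ] V →L[ℝ] ℝ)
    (hkμ : ∀ μ, kμ μ = ∑ ξ : Fin nk, θk ξ μ • K ξ)
    (μ₀ : EuclideanSpace ℝ (Fin P))
    (Dθa : Fin na → EuclideanSpace ℝ (Fin P) →L[ℝ] ℝ)
    (hDθa : ∀ ξ, HasFDerivAt (θa ξ) (Dθa ξ) μ₀)
    (Dθl : Fin nl → EuclideanSpace ℝ (Fin P) →L[ℝ] ℝ)
    (hDθl : ∀ ξ, HasFDerivAt (θl ξ) (Dθl ξ) μ₀)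
    (Dθj : Fin nj → EuclideanSpace ℝ (Fin P) →L[ℝ] ℝ)
    (hDθj : ∀ ξ, HasFDerivAt (θj ξ) (Dθj ξ) μ₀)
    (Dθk : Fin nk → EuclideanSpace ℝ (Fin P) →L[ℝ] ℝ)
    (hDθk : ∀ ξ, HasFDerivAt (θk ξ) (Dθk ξ) μ₀)
    (Θ : EuclideanSpace ℝ (Fin P) → ℝ)
    (DΘ : EuclideanSpace ℝ (Fin P) →L[ℝ] ℝ) (hDΘ : HasFDerivAt Θ DΘ μ₀)
    (U : Set (EuclideanSpace ℝ (Fin P))) (hU : U ∈ nhds μ₀)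
    (hθa_cont : ∀ ξ, ContinuousOn (θa ξ) U) (hθl_cont : ∀ ξ, ContinuousOn (θl ξ) U)
    (hθj_cont : ∀ ξ, ContinuousOn (θj ξ) U) (hθk_cont : ∀ ξ, ContinuousOn (θk ξ) U)
    (hΘ_cont : ContinuousOn Θ U)
    (ha_sym : ∀ μ ∈ U, ∀ v w : V, aμ μ v w = aμ μ w v)
    (α : ℝ) (hα : 0 < α)
    (ha_coer : ∀ μ ∈ U, ∀ v : V, α * ‖v‖ ^ 2 ≤ aμ μ v v)
    (u : EuclideanSpace ℝ (Fin P) → V)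
    (hu : ∀ μ ∈ U, ∀ v : V, aμ μ (u μ) v = lμ μ v)
    (p : EuclideanSpace ℝ (Fin P) → V)
    (hp : ∀ μ ∈ U, ∀ v : V, aμ μ v (p μ) = jμ μ v + 2 * kμ μ v (u μ))
    (Jhat : EuclideanSpace ℝ (Fin P) → ℝ)
    (hJhat : ∀ μ, Jhat μ = Θ μ + jμ μ (u μ) + kμ μ (u μ) (u μ)) :
    ∃ D : EuclideanSpace ℝ (Fin P) →L[ℝ] ℝ,
      HasFDerivAt Jhat D μ₀ ∧
      ∀ i : Fin P,
        D (EuclideanSpace.single i 1)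
          = DΘ (EuclideanSpace.single i 1)
            + (∑ ξ : Fin nj, Dθj ξ (EuclideanSpace.single i 1) * Jf ξ (u μ₀))
            + (∑ ξ : Fin nk, Dθk ξ (EuclideanSpace.single i 1) * K ξ (u μ₀) (u μ₀))
            + (∑ ξ : Fin nl, Dθl ξ (EuclideanSpace.single i 1) * L ξ (p μ₀))
            - (∑ ξ : Fin na, Dθa ξ (EuclideanSpace.single i 1) * A ξ (u μ₀) (p μ₀)) := by  classical
  have hμ₀U : μ₀ ∈ U := mem_of_mem_nhds hU
  -- Riesz/operator representatives
  set B : Fin na → V →L[ℝ] V :=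
    fun ξ => InnerProductSpace.continuousLinearMapOfBilin (𝕜 := ℝ) (A ξ) with hBdef
  set T : EuclideanSpace ℝ (Fin P) → (V →L[ℝ] V) := fun μ => ∑ ξ, θa ξ μ • B ξ with hTdef
  have hTinner : ∀ μ (v w : V), ⟪T μ v, w⟫ = aμ μ v w := by
    intro μ v w
    simp [hTdef, hBdef, haμ, ContinuousLinearMap.sum_apply, ContinuousLinearMap.smul_apply,
      sum_inner, real_inner_smul_left]
  set FL : Fin nl → V := fun ξ => (InnerProductSpace.toDual ℝ V).symm (L ξ) with hFLdef
  set F : EuclideanSpace ℝ (Fin P) → V := fun μ => ∑ ξ, θl ξ μ • FL ξ with hFdef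
  have hFinner : ∀ μ (w : V), ⟪F μ, w⟫ = lμ μ w := by
    intro μ w
    simp [hFdef, hFLdef, hlμ, ContinuousLinearMap.sum_apply, ContinuousLinearMap.smul_apply,
      sum_inner, real_inner_smul_left]
  have hcoer : ∀ μ ∈ U, IsCoercive (aμ μ) := by
    intro μ hμ
    exact ⟨α, hα, fun v => le_trans (le_of_eq (by ring)) (ha_coer μ hμ v)⟩
  have hTunit : ∀ μ ∈ U, IsUnit (T μ) := by
    intro μ hμ
    set e := (hcoer μ hμ).continuousLinearEquivOfBilin with he
    have hTe : T μ = ↑e := by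
      ext v
      apply ext_inner_right ℝ
      intro w
      rw [hTinner]
      exact ((hcoer μ hμ).continuousLinearEquivOfBilin_apply v w).symm
    refine ⟨⟨T μ, ↑e.symm, ?_, ?_⟩, rfl⟩
    · ext x; simp [hTe, ContinuousLinearMap.mul_apply]
    · ext x; simp [hTe, ContinuousLinearMap.mul_apply]
  set g : EuclideanSpace ℝ (Fin P) → V := fun μ => Ring.inverse (T μ) (F μ) with hgdef
  have hTu : ∀ μ ∈ U, T μ (u μ) = F μ := by
    intro μ hμ
    apply ext_inner_right ℝ
    intro w
    rw [hTinner, hFinner]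
    exact hu μ hμ w
  have hug : ∀ μ ∈ U, u μ = g μ := by
    intro μ hμ
    have h1 : Ring.inverse (T μ) * T μ = 1 := Ring.inverse_mul_cancel _ (hTunit μ hμ)
    have h2 := congrArg (fun f : V →L[ℝ] V => f (u μ)) h1
    simp only [ContinuousLinearMap.mul_apply, ContinuousLinearMap.one_apply] at h2
    calc u μ = Ring.inverse (T μ) (T μ (u μ)) := h2.symm
      _ = g μ := by rw [hTu μ hμ]
  have hT' : HasFDerivAt T (∑ ξ, (Dθa ξ).smulRight (B ξ)) μ₀ :=
    HasFDerivAt.fun_sum fun ξ _ => (hDθa ξ).smul_const (B ξ)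
  have hF' : HasFDerivAt F (∑ ξ, (Dθl ξ).smulRight (FL ξ)) μ₀ :=
    HasFDerivAt.fun_sum fun ξ _ => (hDθl ξ).smul_const (FL ξ)
  obtain ⟨e₀, he₀⟩ := hTunit μ₀ hμ₀U
  have hinv : HasFDerivAt (fun μ => Ring.inverse (T μ))
      ((-(ContinuousLinearMap.mulLeftRight ℝ (V →L[ℝ] V) ↑e₀⁻¹ ↑e₀⁻¹)).comp
        (∑ ξ, (Dθa ξ).smulRight (B ξ))) μ₀ := by
    have h1 := hasFDerivAt_ringInverse (𝕜 := ℝ) e₀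
    rw [he₀] at h1
    exact h1.comp μ₀ hT'
  obtain ⟨Du, hu'⟩ : ∃ D, HasFDerivAt u D μ₀ := by
    refine ⟨_, HasFDerivAt.congr_of_eventuallyEq (hinv.clm_apply hF') ?_⟩
    exact Filter.eventuallyEq_of_mem hU fun μ hμ => hug μ hμ
  -- primal sensitivity identity
  have hprimal : ∀ (v : V) (h : EuclideanSpace ℝ (Fin P)), aμ μ₀ (Du h) v
      = (∑ ξ, Dθl ξ h * L ξ v) - ∑ ξ, Dθa ξ h * A ξ (u μ₀) v := by
    intro v h
    have hd : ∀ ξ : Fin na, HasFDerivAt (fun μ => A ξ (u μ) v) (((A ξ).flip v).comp Du) μ₀ :=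
      fun ξ => ((A ξ).flip v).hasFDerivAt.comp μ₀ hu'
    have hφ : HasFDerivAt (fun μ => ∑ ξ, θa ξ μ * A ξ (u μ) v)
        (∑ ξ, (θa ξ μ₀ • (((A ξ).flip v).comp Du) + A ξ (u μ₀) v • Dθa ξ)) μ₀ :=
      HasFDerivAt.fun_sum fun ξ _ => (hDθa ξ).mul (hd ξ)
    have hψ : HasFDerivAt (fun μ => ∑ ξ, θl ξ μ * L ξ v)
        (∑ ξ, (θl ξ μ₀ • (0 : EuclideanSpace ℝ (Fin P) →L[ℝ] ℝ) + L ξ v • Dθl ξ)) μ₀ :=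
      HasFDerivAt.fun_sum fun ξ _ => (hDθl ξ).mul (hasFDerivAt_const (L ξ v) μ₀)
    have heq : (fun μ => ∑ ξ, θl ξ μ * L ξ v) =ᶠ[nhds μ₀] (fun μ => ∑ ξ, θa ξ μ * A ξ (u μ) v) := by
      refine Filter.eventuallyEq_of_mem hU fun μ hμ => ?_
      have h1 : aμ μ (u μ) v = lμ μ v := hu μ hμ v
      rw [haμ, hlμ] at h1
      simpa [ContinuousLinearMap.sum_apply, ContinuousLinearMap.smul_apply] using h1.symm
    have hDeq := (hφ.congr_of_eventuallyEq heq).unique hψ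
    have h3 := congrArg (fun (D : EuclideanSpace ℝ (Fin P) →L[ℝ] ℝ) => D h) hDeq
    simp only [ContinuousLinearMap.sum_apply, ContinuousLinearMap.add_apply,
      ContinuousLinearMap.smul_apply, ContinuousLinearMap.coe_comp', Function.comp_apply,
      ContinuousLinearMap.flip_apply, ContinuousLinearMap.zero_apply, smul_eq_mul, mul_zero,
      zero_add, Finset.sum_const_zero, Finset.sum_add_distrib] at h3
    have e1 : ∑ ξ, A ξ (u μ₀) v * Dθa ξ h = ∑ ξ, Dθa ξ h * A ξ (u μ₀) v :=
      Finset.sum_congr rfl fun ξ _ => mul_comm _ _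
    have e2 : ∑ ξ, L ξ v * Dθl ξ h = ∑ ξ, Dθl ξ h * L ξ v :=
      Finset.sum_congr rfl fun ξ _ => mul_comm _ _
    have e3 : aμ μ₀ (Du h) v = ∑ ξ, θa ξ μ₀ * A ξ (Du h) v := by
      rw [haμ]
      simp [ContinuousLinearMap.sum_apply, ContinuousLinearMap.smul_apply]
    rw [e3]
    linarith [h3, e1, e2]
  -- build the derivative of Jhat
  have hjterm : ∀ ξ : Fin nj, HasFDerivAt (fun μ => θj ξ μ * Jf ξ (u μ))
      (θj ξ μ₀ • ((Jf ξ).comp Du) + Jf ξ (u μ₀) • Dθj ξ) μ₀ :=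
    fun ξ => (hDθj ξ).mul ((Jf ξ).hasFDerivAt.comp μ₀ hu')
  have hkterm : ∀ ξ : Fin nk, HasFDerivAt (fun μ => θk ξ μ * K ξ (u μ) (u μ))
      (θk ξ μ₀ • ((K ξ (u μ₀)).comp Du + ((K ξ).comp Du).flip (u μ₀))
        + K ξ (u μ₀) (u μ₀) • Dθk ξ) μ₀ :=
    fun ξ => (hDθk ξ).mul (((K ξ).hasFDerivAt.comp μ₀ hu').clm_apply hu')
  have hbig : HasFDerivAt (fun μ => Θ μ + ∑ ξ, θj ξ μ * Jf ξ (u μ)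
        + ∑ ξ, θk ξ μ * K ξ (u μ) (u μ))
      (DΘ + ∑ ξ, (θj ξ μ₀ • ((Jf ξ).comp Du) + Jf ξ (u μ₀) • Dθj ξ)
        + ∑ ξ, (θk ξ μ₀ • ((K ξ (u μ₀)).comp Du + ((K ξ).comp Du).flip (u μ₀))
            + K ξ (u μ₀) (u μ₀) • Dθk ξ)) μ₀ :=
    (hDΘ.add (HasFDerivAt.fun_sum fun ξ _ => hjterm ξ)).add (HasFDerivAt.fun_sum fun ξ _ => hkterm ξ)
  have hJeq : Jhat = (fun μ => Θ μ + ∑ ξ, θj ξ μ * Jf ξ (u μ)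
      + ∑ ξ, θk ξ μ * K ξ (u μ) (u μ)) := by
    funext μ
    rw [hJhat, hjμ, hkμ]
    simp [ContinuousLinearMap.sum_apply, ContinuousLinearMap.smul_apply]
  refine ⟨_, hJeq ▸ hbig, ?_⟩
  intro i
  set h : EuclideanSpace ℝ (Fin P) := EuclideanSpace.single i 1 with hh
  simp only [ContinuousLinearMap.add_apply, ContinuousLinearMap.sum_apply,
    ContinuousLinearMap.smul_apply, ContinuousLinearMap.coe_comp', Function.comp_apply,
    ContinuousLinearMap.flip_apply, smul_eq_mul]
  -- key exchange using the dual problem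
  have hdual : aμ μ₀ (Du h) (p μ₀) = jμ μ₀ (Du h) + 2 * kμ μ₀ (Du h) (u μ₀) := hp μ₀ hμ₀U (Du h)
  have hj0 : jμ μ₀ (Du h) = ∑ ξ, θj ξ μ₀ * Jf ξ (Du h) := by
    rw [hjμ]; simp [ContinuousLinearMap.sum_apply, ContinuousLinearMap.smul_apply]
  have hk0 : kμ μ₀ (Du h) (u μ₀) = ∑ ξ, θk ξ μ₀ * K ξ (Du h) (u μ₀) := by
    rw [hkμ]; simp [ContinuousLinearMap.sum_apply, ContinuousLinearMap.smul_apply]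
  have hkey : ∑ ξ, θj ξ μ₀ * Jf ξ (Du h)
      + ∑ ξ, θk ξ μ₀ * (K ξ (u μ₀) (Du h) + K ξ (Du h) (u μ₀))
      = (∑ ξ, Dθl ξ h * L ξ (p μ₀)) - ∑ ξ, Dθa ξ h * A ξ (u μ₀) (p μ₀) := by
    have hsym : ∀ ξ : Fin nk, K ξ (u μ₀) (Du h) + K ξ (Du h) (u μ₀)
        = 2 * K ξ (Du h) (u μ₀) := by
      intro ξ; rw [hK_sym ξ (u μ₀) (Du h)]; ring
    have h2 : ∑ ξ, θk ξ μ₀ * (K ξ (u μ₀) (Du h) + K ξ (Du h) (u μ₀))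
        = 2 * ∑ ξ, θk ξ μ₀ * K ξ (Du h) (u μ₀) := by
      rw [Finset.mul_sum]
      exact Finset.sum_congr rfl fun ξ _ => by rw [hsym ξ]; ring
    rw [h2, ← hj0, ← hk0, ← hdual, hprimal (p μ₀) h]
  -- finish by arithmetic
  have := hkey
  rw [Finset.sum_add_distrib, Finset.sum_add_distrib] at *
  have e4 : ∑ ξ, Jf ξ (u μ₀) * Dθj ξ h = ∑ ξ, Dθj ξ h * Jf ξ (u μ₀) :=
    Finset.sum_congr rfl fun ξ _ => mul_comm _ _
  have e5 : ∑ ξ, K ξ (u μ₀) (u μ₀) * Dθk ξ h = ∑ ξ, Dθk ξ h * K ξ (u μ₀) (u μ₀) :=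
    Finset.sum_congr rfl fun ξ _ => mul_comm _ _
  have e6 : ∑ ξ, θk ξ μ₀ * (K ξ (u μ₀) (Du h) + K ξ (Du h) (u μ₀))
      = ∑ ξ, θk ξ μ₀ * K ξ (u μ₀) (Du h) + ∑ ξ, θk ξ μ₀ * K ξ (Du h) (u μ₀) := by
    rw [← Finset.sum_add_distrib]
    exact Finset.sum_congr rfl fun ξ _ => by ring
  linarith [hkey, e4, e5, e6]
end

section
/- Upper bound on the dual model reduction error: ‖p_h − p_r‖ ≤ Δ_du := α⁻¹ (2‖k‖ Δ_pr + ‖r^du(u_r, p_r)‖). -/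
lemma div_trick {α C x : ℝ} (hα : 0 < α) (hC : 0 ≤ C) (h : α * x ^ 2 ≤ C * x)
    (hx : 0 ≤ x) : x ≤ α⁻¹ * C := by
  rcases eq_or_lt_of_le hx with h0 | h0
  · rw [← h0]; positivity
  · have hax : α * x ≤ C := by nlinarith
    rw [inv_mul_eq_div, le_div_iff₀ hα]; linarith [hax]

/-- Upper bound on the dual model reduction error:
`‖p_h − p_r‖ ≤ Δ_du := α⁻¹ (2‖k‖ Δ_pr + ‖r^du(u_r, p_r)‖)`, where
`Δ_pr := α⁻¹ ‖r^pr(u_r)‖`, `r^pr(u)[v] := l(v) − a(u, v)` and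
`r^du(u, p)[v] := j(v) + 2k(v, u) − a(v, p)`. -/
theorem stmt_7
    {V : Type*} [NormedAddCommGroup V] [InnerProductSpace ℝ V] [CompleteSpace V]
    (a : V →L[ℝ] V →L[ℝ] ℝ) (l j : V →L[ℝ] ℝ) (k : V →L[ℝ] V →L[ℝ] ℝ)
    (α : ℝ) (hα : 0 < α)
    (ha_sym : ∀ v w : V, a v w = a w v)
    (ha_coer : ∀ v : V, α * ‖v‖ ^ 2 ≤ a v v)
    (hk_sym : ∀ v w : V, k v w = k w v)
    (u_h : V) (hu_h : ∀ v : V, a u_h v = l v)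
    (p_h : V) (hp_h : ∀ v : V, a v p_h = j v + 2 * k v u_h)
    (Vpr Vdu : Submodule ℝ V)
    (hVpr : IsClosed (Vpr : Set V)) (hVdu : IsClosed (Vdu : Set V))
    (u_r : V) (hu_r_mem : u_r ∈ Vpr) (hu_r : ∀ v ∈ Vpr, a u_r v = l v)
    (p_r : V) (hp_r_mem : p_r ∈ Vdu) (hp_r : ∀ q ∈ Vdu, a q p_r = j q + 2 * k q u_r) :
    ‖p_h - p_r‖ ≤
      α⁻¹ * (2 * ‖k‖ * (α⁻¹ * ‖l - a u_r‖)
        + ‖j + (2 : ℝ) • k.flip u_r - a.flip p_r‖) := by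
  set e := u_h - u_r with he
  -- Primal error bound
  have hpr : ‖e‖ ≤ α⁻¹ * ‖l - a u_r‖ := by
    apply div_trick hα (norm_nonneg _) _ (norm_nonneg _)
    calc α * ‖e‖ ^ 2 ≤ a e e := ha_coer e
      _ = (l - a u_r) e := by
          rw [he, map_sub a]
          simp [ContinuousLinearMap.sub_apply, hu_h]
      _ ≤ |(l - a u_r) e| := le_abs_self _
      _ ≤ ‖l - a u_r‖ * ‖e‖ := (l - a u_r).le_opNorm e
  set d := p_h - p_r with hd
  set R := j + (2 : ℝ) • k.flip u_r - a.flip p_r with hR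
  have hRapp : ∀ v : V, R v = j v + 2 * k v u_r - a v p_r := by
    intro v
    simp [hR, ContinuousLinearMap.sub_apply, ContinuousLinearMap.add_apply,
      ContinuousLinearMap.smul_apply, ContinuousLinearMap.flip_apply]
  apply div_trick hα _ _ (norm_nonneg _)
  · positivity
  calc α * ‖d‖ ^ 2 ≤ a d d := ha_coer d
    _ = R d + 2 * k d e := by
        have key : ∀ v : V, a v (p_h - p_r) = R v + 2 * k v (u_h - u_r) := by
          intro v
          rw [map_sub (a v), hp_h v, hRapp v, map_sub (k v)]; ring
        rw [hd, he]; exact key _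
    _ ≤ ‖R‖ * ‖d‖ + 2 * (‖k‖ * ‖d‖ * ‖e‖) := by
        gcongr
        · exact le_trans (le_abs_self _) (R.le_opNorm d)
        · exact le_trans (le_abs_self _) (k.le_opNorm₂ d e)
    _ ≤ ‖R‖ * ‖d‖ + 2 * (‖k‖ * ‖d‖ * (α⁻¹ * ‖l - a u_r‖)) := by
        gcongr
    _ = (2 * ‖k‖ * (α⁻¹ * ‖l - a u_r‖) + ‖R‖) * ‖d‖ := by ring
end

section
/- Upper bound on the model reduction error of the standard RB reduced functional: |Ĵ_h − Ĵ_r| ≤ Δ_pr ‖r^du(u_r, p_r)‖ + Δ_pr² ‖k‖ + |r^pr(u_r)[p_r]|. -/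
/-- Upper bound on the model reduction error of the standard RB reduced functional:
`|Ĵ_h − Ĵ_r| ≤ Δ_pr ‖r^du(u_r, p_r)‖ + Δ_pr² ‖k‖ + |r^pr(u_r)[p_r]|`. -/
theorem stmt_8
    {V : Type*} [NormedAddCommGroup V] [InnerProductSpace ℝ V] [CompleteSpace V]
    (a : V →L[ℝ] V →L[ℝ] ℝ) (l j : V →L[ℝ] ℝ) (k : V →L[ℝ] V →L[ℝ] ℝ)
    (α : ℝ) (hα : 0 < α)
    (ha_sym : ∀ v w : V, a v w = a w v)
    (ha_coer : ∀ v : V, α * ‖v‖ ^ 2 ≤ a v v)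
    (hk_sym : ∀ v w : V, k v w = k w v)
    (u_h : V) (hu_h : ∀ v : V, a u_h v = l v)
    (Vpr Vdu : Submodule ℝ V)
    (hVpr : IsClosed (Vpr : Set V)) (hVdu : IsClosed (Vdu : Set V))
    (u_r : V) (hu_r_mem : u_r ∈ Vpr) (hu_r : ∀ v ∈ Vpr, a u_r v = l v)
    (p_r : V) (hp_r_mem : p_r ∈ Vdu) (hp_r : ∀ q ∈ Vdu, a q p_r = j q + 2 * k q u_r)
    (Θ : ℝ) :
    |(Θ + j u_h + k u_h u_h) - (Θ + j u_r + k u_r u_r)| ≤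
      (α⁻¹ * ‖l - a u_r‖) * ‖j + (2 : ℝ) • k.flip u_r - a.flip p_r‖
        + (α⁻¹ * ‖l - a u_r‖) ^ 2 * ‖k‖
        + |(l - a u_r) p_r| := by
  set e := u_h - u_r with he
  set rpr : V →L[ℝ] ℝ := l - a u_r with hrpr
  set rdu : V →L[ℝ] ℝ := j + (2 : ℝ) • k.flip u_r - a.flip p_r with hrdu
  have hrpr_app : ∀ v : V, rpr v = a e v := by
    intro v
    simp [hrpr, he, ← hu_h v, map_sub]
  have hrdu_app : ∀ v : V, rdu v = j v + 2 * k v u_r - a v p_r := by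
    intro v
    simp [hrdu, ContinuousLinearMap.sub_apply, ContinuousLinearMap.add_apply]
  -- bound on ‖e‖
  have hee : α * ‖e‖ ^ 2 ≤ ‖rpr‖ * ‖e‖ := by
    calc α * ‖e‖ ^ 2 ≤ a e e := ha_coer e
    _ = rpr e := (hrpr_app e).symm
    _ ≤ |rpr e| := le_abs_self _
    _ ≤ ‖rpr‖ * ‖e‖ := rpr.le_opNorm e
  have hnorm_e : ‖e‖ ≤ α⁻¹ * ‖rpr‖ := by
    rcases eq_or_lt_of_le (norm_nonneg e) with h0 | h0
    · rw [← h0]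
      positivity
    · rw [inv_mul_eq_div, le_div_iff₀ hα]
      nlinarith
  -- key identity
  have key : (Θ + j u_h + k u_h u_h) - (Θ + j u_r + k u_r u_r)
      = rdu e + k e e + rpr p_r := by
    have h1 : rpr p_r = a u_h p_r - a u_r p_r := by
      simp [hrpr, ← hu_h p_r]
    rw [hrdu_app, h1]
    simp only [he, map_sub, ContinuousLinearMap.sub_apply]
    linarith [hk_sym u_r u_h]
  rw [key]
  have b1 : |rdu e| ≤ (α⁻¹ * ‖rpr‖) * ‖rdu‖ := by
    calc |rdu e| ≤ ‖rdu‖ * ‖e‖ := rdu.le_opNorm e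
    _ ≤ ‖rdu‖ * (α⁻¹ * ‖rpr‖) := by
        exact mul_le_mul_of_nonneg_left hnorm_e (norm_nonneg _)
    _ = (α⁻¹ * ‖rpr‖) * ‖rdu‖ := by ring
  have b2 : |k e e| ≤ (α⁻¹ * ‖rpr‖) ^ 2 * ‖k‖ := by
    have h := k.le_opNorm₂ e e
    have hΔ : (0:ℝ) ≤ α⁻¹ * ‖rpr‖ := by positivity
    calc |k e e| ≤ ‖k‖ * ‖e‖ * ‖e‖ := h
    _ ≤ ‖k‖ * (α⁻¹ * ‖rpr‖) * (α⁻¹ * ‖rpr‖) := by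
        gcongr <;> exact norm_nonneg _
    _ = (α⁻¹ * ‖rpr‖) ^ 2 * ‖k‖ := by ring
  calc |rdu e + k e e + rpr p_r| ≤ |rdu e| + |k e e| + |rpr p_r| := by
        exact (abs_add_le _ _).trans (by gcongr; exact abs_add_le _ _)
  _ ≤ (α⁻¹ * ‖rpr‖) * ‖rdu‖ + (α⁻¹ * ‖rpr‖) ^ 2 * ‖k‖ + |rpr p_r| := by
        gcongr
end

section
/- Upper bound on the model reduction error of the NCD-corrected RB reduced functional: |Ĵ_h − Ĵ_r^c| ≤ Δ_pr ‖r^du(u_r, p_r)‖ + Δ_pr² ‖k‖. -/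
/-- Upper bound on the model reduction error of the NCD-corrected RB reduced functional:
`|Ĵ_h − Ĵ_r^c| ≤ Δ_pr ‖r^du(u_r, p_r)‖ + Δ_pr² ‖k‖`, where
`Ĵ_r^c := Ĵ_r + r^pr(u_r)[p_r]`. -/
theorem stmt_9
    {V : Type*} [NormedAddCommGroup V] [InnerProductSpace ℝ V] [CompleteSpace V]
    (a : V →L[ℝ] V →L[ℝ] ℝ) (l j : V →L[ℝ] ℝ) (k : V →L[ℝ] V →L[ℝ] ℝ)
    (α : ℝ) (hα : 0 < α)
    (ha_sym : ∀ v w : V, a v w = a w v)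
    (ha_coer : ∀ v : V, α * ‖v‖ ^ 2 ≤ a v v)
    (hk_sym : ∀ v w : V, k v w = k w v)
    (u_h : V) (hu_h : ∀ v : V, a u_h v = l v)
    (Vpr Vdu : Submodule ℝ V)
    (hVpr : IsClosed (Vpr : Set V)) (hVdu : IsClosed (Vdu : Set V))
    (u_r : V) (hu_r_mem : u_r ∈ Vpr) (hu_r : ∀ v ∈ Vpr, a u_r v = l v)
    (p_r : V) (hp_r_mem : p_r ∈ Vdu) (hp_r : ∀ q ∈ Vdu, a q p_r = j q + 2 * k q u_r)
    (Θ : ℝ) :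
    |(Θ + j u_h + k u_h u_h) - ((Θ + j u_r + k u_r u_r) + (l p_r - a u_r p_r))| ≤
      (α⁻¹ * ‖l - a u_r‖) * ‖j + (2 : ℝ) • k.flip u_r - a.flip p_r‖
        + (α⁻¹ * ‖l - a u_r‖) ^ 2 * ‖k‖ := by
  set e := u_h - u_r with he
  set X := j + (2 : ℝ) • k.flip u_r - a.flip p_r with hX
  -- key identity
  have key : (Θ + j u_h + k u_h u_h) - ((Θ + j u_r + k u_r u_r) + (l p_r - a u_r p_r))
      = X e + k e e := by
    have h1 : l p_r = a u_h p_r := (hu_h p_r).symm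
    have h2 : k u_h u_r = k u_r u_h := hk_sym _ _
    simp only [hX, he, map_sub, ContinuousLinearMap.sub_apply,
      ContinuousLinearMap.add_apply, ContinuousLinearMap.smul_apply,
      ContinuousLinearMap.flip_apply, smul_eq_mul]
    rw [h1, h2]; ring
  -- residual representation
  have hres : ∀ v : V, (l - a u_r) v = a e v := by
    intro v
    simp only [he, map_sub, ContinuousLinearMap.sub_apply, hu_h v]
  -- error bound
  have hC : (0:ℝ) ≤ ‖l - a u_r‖ := norm_nonneg _
  have hne : ‖e‖ ≤ α⁻¹ * ‖l - a u_r‖ := by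
    have h1 : α * ‖e‖ ^ 2 ≤ ‖l - a u_r‖ * ‖e‖ := by
      calc α * ‖e‖ ^ 2 ≤ a e e := ha_coer e
        _ = (l - a u_r) e := (hres e).symm
        _ ≤ |(l - a u_r) e| := le_abs_self _
        _ ≤ ‖l - a u_r‖ * ‖e‖ := (l - a u_r).le_opNorm e
    by_cases h : ‖e‖ = 0
    · rw [h]; positivity
    · have hpos : 0 < ‖e‖ := lt_of_le_of_ne (norm_nonneg _) (Ne.symm h)
      have h2 : α * ‖e‖ ≤ ‖l - a u_r‖ := by nlinarith
      calc ‖e‖ = α⁻¹ * (α * ‖e‖) := by field_simp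
        _ ≤ α⁻¹ * ‖l - a u_r‖ :=
          mul_le_mul_of_nonneg_left h2 (le_of_lt (inv_pos.mpr hα))
  have hΔ : (0:ℝ) ≤ α⁻¹ * ‖l - a u_r‖ := by positivity
  rw [key]
  have h3 : |X e| ≤ ‖X‖ * ‖e‖ := by
    simpa using X.le_opNorm e
  have h4 : |k e e| ≤ ‖k‖ * ‖e‖ * ‖e‖ := by
    simpa using k.le_opNorm₂ e e
  calc |X e + k e e| ≤ |X e| + |k e e| := abs_add_le _ _
    _ ≤ ‖X‖ * ‖e‖ + ‖k‖ * ‖e‖ * ‖e‖ := add_le_add h3 h4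
    _ ≤ (α⁻¹ * ‖l - a u_r‖) * ‖X‖ + (α⁻¹ * ‖l - a u_r‖) ^ 2 * ‖k‖ := by
        have t1 : ‖X‖ * ‖e‖ ≤ ‖X‖ * (α⁻¹ * ‖l - a u_r‖) :=
          mul_le_mul_of_nonneg_left hne (norm_nonneg X)
        have t2 : ‖e‖ * ‖e‖ ≤ (α⁻¹ * ‖l - a u_r‖) * (α⁻¹ * ‖l - a u_r‖) :=
          mul_le_mul hne hne (norm_nonneg e) hΔ
        have t3 : ‖k‖ * (‖e‖ * ‖e‖) ≤ ‖k‖ * ((α⁻¹ * ‖l - a u_r‖) * (α⁻¹ * ‖l - a u_r‖)) :=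
          mul_le_mul_of_nonneg_left t2 (norm_nonneg k)
        nlinarith [t1, t3]
end

section
/- Exact error representation for the NCD-corrected RB reduced functional: with e := u_h − u_r, it holds that Ĵ_h − Ĵ_r^c = r^du(u_r, p_r)[e] + k(e, e). -/
/-- Exact error representation for the NCD-corrected RB reduced functional:
with `e := u_h − u_r`, it holds `Ĵ_h − Ĵ_r^c = r^du(u_r, p_r)[e] + k(e, e)`. -/
theorem stmt_10
    {V : Type*} [NormedAddCommGroup V] [InnerProductSpace ℝ V] [CompleteSpace V]
    (a : V →L[ℝ] V →L[ℝ] ℝ) (l j : V →L[ℝ] ℝ) (k : V →L[ℝ] V →L[ℝ] ℝ)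
    (α : ℝ) (hα : 0 < α)
    (ha_sym : ∀ v w : V, a v w = a w v)
    (ha_coer : ∀ v : V, α * ‖v‖ ^ 2 ≤ a v v)
    (hk_sym : ∀ v w : V, k v w = k w v)
    (u_h : V) (hu_h : ∀ v : V, a u_h v = l v)
    (u_r p_r : V) (Θ : ℝ) :
    (Θ + j u_h + k u_h u_h) - ((Θ + j u_r + k u_r u_r) + (l p_r - a u_r p_r)) =
      (j (u_h - u_r) + 2 * k (u_h - u_r) u_r - a (u_h - u_r) p_r)
        + k (u_h - u_r) (u_h - u_r) := by
  have hl : l p_r = a u_h p_r := (hu_h p_r).symm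
  simp only [map_sub, ContinuousLinearMap.sub_apply, hl]
  have := hk_sym u_h u_r
  ring_nf
  linarith [hk_sym u_h u_r]
end

section
/- Upper bound on the model reduction error of the inexact (standard-RB) gradient component: with g_r := dΘ + dj(u_r) + dk(u_r, u_r) + dl(p_r) − da(u_r, p_r), it holds that |g_h − g_r| ≤ 2 Δ_pr ‖u_r‖ ‖dk‖ + Δ_pr (‖dj‖ + ‖da‖ ‖p_r‖) + Δ_du (‖dl‖ + ‖da‖ ‖u_r‖) + Δ_pr Δ_du ‖da‖ + Δ_pr² ‖dk‖. -/
lemma aux_div {α x R : ℝ} (hα : 0 < α) (hx : 0 ≤ x) (hR : 0 ≤ R)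
    (h : α * x ^ 2 ≤ R * x) : x ≤ α⁻¹ * R := by
  rcases hx.eq_or_lt with h0 | h0
  · rw [← h0]; positivity
  · rw [le_inv_mul_iff₀ hα]
    nlinarith


set_option maxHeartbeats 2000000

/-- Upper bound on the model reduction error of the inexact (standard-RB) gradient
component: with `g_r := dΘ + dj(u_r) + dk(u_r, u_r) + dl(p_r) − da(u_r, p_r)`,
`|g_h − g_r| ≤ 2 Δ_pr ‖u_r‖ ‖dk‖ + Δ_pr (‖dj‖ + ‖da‖ ‖p_r‖) + Δ_du (‖dl‖ + ‖da‖ ‖u_r‖)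
 + Δ_pr Δ_du ‖da‖ + Δ_pr² ‖dk‖`. -/
theorem stmt_11
    {V : Type*} [NormedAddCommGroup V] [InnerProductSpace ℝ V] [CompleteSpace V]
    (a : V →L[ℝ] V →L[ℝ] ℝ) (l j : V →L[ℝ] ℝ) (k : V →L[ℝ] V →L[ℝ] ℝ)
    (α : ℝ) (hα : 0 < α)
    (ha_sym : ∀ v w : V, a v w = a w v)
    (ha_coer : ∀ v : V, α * ‖v‖ ^ 2 ≤ a v v)
    (hk_sym : ∀ v w : V, k v w = k w v)
    (u_h : V) (hu_h : ∀ v : V, a u_h v = l v)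
    (p_h : V) (hp_h : ∀ v : V, a v p_h = j v + 2 * k v u_h)
    (Vpr Vdu : Submodule ℝ V)
    (hVpr : IsClosed (Vpr : Set V)) (hVdu : IsClosed (Vdu : Set V))
    (u_r : V) (hu_r_mem : u_r ∈ Vpr) (hu_r : ∀ v ∈ Vpr, a u_r v = l v)
    (p_r : V) (hp_r_mem : p_r ∈ Vdu) (hp_r : ∀ q ∈ Vdu, a q p_r = j q + 2 * k q u_r)
    (dΘ : ℝ) (dl dj : V →L[ℝ] ℝ) (da dk : V →L[ℝ] V →L[ℝ] ℝ)
    (hdk_sym : ∀ v w : V, dk v w = dk w v) :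
    |(dΘ + dj u_h + dk u_h u_h + dl p_h - da u_h p_h)
        - (dΘ + dj u_r + dk u_r u_r + dl p_r - da u_r p_r)| ≤
      2 * (α⁻¹ * ‖l - a u_r‖) * ‖u_r‖ * ‖dk‖
        + (α⁻¹ * ‖l - a u_r‖) * (‖dj‖ + ‖da‖ * ‖p_r‖)
        + (α⁻¹ * (2 * ‖k‖ * (α⁻¹ * ‖l - a u_r‖)
            + ‖j + (2 : ℝ) • k.flip u_r - a.flip p_r‖)) * (‖dl‖ + ‖da‖ * ‖u_r‖)
        + (α⁻¹ * ‖l - a u_r‖)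
          * (α⁻¹ * (2 * ‖k‖ * (α⁻¹ * ‖l - a u_r‖)
              + ‖j + (2 : ℝ) • k.flip u_r - a.flip p_r‖)) * ‖da‖
        + (α⁻¹ * ‖l - a u_r‖) ^ 2 * ‖dk‖ := by
  set Epr : ℝ := α⁻¹ * ‖l - a u_r‖ with hEprdef
  set Edu : ℝ := α⁻¹ * (2 * ‖k‖ * Epr + ‖j + (2 : ℝ) • k.flip u_r - a.flip p_r‖) with hEdudef
  have hEpr0 : 0 ≤ Epr := by positivity
  have hrdu0 : (0:ℝ) ≤ ‖j + (2 : ℝ) • k.flip u_r - a.flip p_r‖ := norm_nonneg _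
  have hEdu0 : 0 ≤ Edu := by positivity
  set eu : V := u_h - u_r with heu
  set ep : V := p_h - p_r with hep
  have hEu : ‖eu‖ ≤ Epr := by
    apply aux_div hα (norm_nonneg _) (norm_nonneg _)
    have h1 := ha_coer eu
    have h2 : a eu eu = (l - a u_r) eu := by
      simp only [heu, map_sub, ContinuousLinearMap.sub_apply, hu_h]
    have h3 : (l - a u_r) eu ≤ ‖l - a u_r‖ * ‖eu‖ := by
      calc (l - a u_r) eu ≤ |(l - a u_r) eu| := le_abs_self _
        _ ≤ ‖l - a u_r‖ * ‖eu‖ := (l - a u_r).le_opNorm eu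
    linarith [h2 ▸ h1]
  have hEp : ‖ep‖ ≤ Edu := by
    apply aux_div hα (norm_nonneg _) (by positivity)
    have h1 := ha_coer ep
    have h2 : a ep ep = (j + (2 : ℝ) • k.flip u_r - a.flip p_r) ep + 2 * k ep eu := by
      have : a ep ep = a ep p_h - a ep p_r := by rw [hep]; exact map_sub (a ep) p_h p_r
      rw [this, hp_h]
      simp only [ContinuousLinearMap.sub_apply, ContinuousLinearMap.add_apply,
        ContinuousLinearMap.smul_apply, ContinuousLinearMap.flip_apply, smul_eq_mul,
        heu, map_sub]
      ring
    have h3 : (j + (2 : ℝ) • k.flip u_r - a.flip p_r) ep ≤ ‖j + (2 : ℝ) • k.flip u_r - a.flip p_r‖ * ‖ep‖ := by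
      calc _ ≤ |(j + (2 : ℝ) • k.flip u_r - a.flip p_r) ep| := le_abs_self _
        _ ≤ _ := (j + (2 : ℝ) • k.flip u_r - a.flip p_r).le_opNorm ep
    have h4 : k ep eu ≤ ‖k‖ * ‖ep‖ * ‖eu‖ := by
      calc k ep eu ≤ |k ep eu| := le_abs_self _
        _ ≤ ‖k‖ * ‖ep‖ * ‖eu‖ := k.le_opNorm₂ ep eu
    have h5 : ‖k‖ * ‖ep‖ * ‖eu‖ ≤ ‖k‖ * Epr * ‖ep‖ := by
      have := mul_le_mul_of_nonneg_left hEu (mul_nonneg (norm_nonneg k) (norm_nonneg ep))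
      nlinarith
    nlinarith [h2 ▸ h1]
  clear_value Epr Edu
  clear hEprdef hEdudef
  -- decomposition of the gradient difference
  have key : (dΘ + dj u_h + dk u_h u_h + dl p_h - da u_h p_h)
        - (dΘ + dj u_r + dk u_r u_r + dl p_r - da u_r p_r)
      = dj eu + dk eu eu + 2 * dk eu u_r + dl ep
        - (da eu p_r + da u_r ep + da eu ep) := by
    simp only [heu, hep, map_sub, ContinuousLinearMap.sub_apply]
    rw [hdk_sym u_r u_h]
    ring
  rw [key]
  have b1 : |dj eu| ≤ ‖dj‖ * Epr := by
    calc |dj eu| ≤ ‖dj‖ * ‖eu‖ := dj.le_opNorm eu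
      _ ≤ ‖dj‖ * Epr := by gcongr
  have b2 : |dk eu eu| ≤ ‖dk‖ * Epr ^ 2 := by
    have h1 := mul_le_mul_of_nonneg_left hEu (norm_nonneg dk)
    have h2 := mul_le_mul h1 hEu (norm_nonneg eu) (mul_nonneg (norm_nonneg dk) hEpr0)
    calc |dk eu eu| ≤ ‖dk‖ * ‖eu‖ * ‖eu‖ := dk.le_opNorm₂ eu eu
      _ ≤ ‖dk‖ * Epr * Epr := h2
      _ = ‖dk‖ * Epr ^ 2 := by ring
  have b3 : |dk eu u_r| ≤ ‖dk‖ * Epr * ‖u_r‖ := by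
    calc |dk eu u_r| ≤ ‖dk‖ * ‖eu‖ * ‖u_r‖ := dk.le_opNorm₂ eu u_r
      _ ≤ ‖dk‖ * Epr * ‖u_r‖ := by gcongr
  have b4 : |dl ep| ≤ ‖dl‖ * Edu := by
    calc |dl ep| ≤ ‖dl‖ * ‖ep‖ := dl.le_opNorm ep
      _ ≤ ‖dl‖ * Edu := by gcongr
  have b5 : |da eu p_r| ≤ ‖da‖ * Epr * ‖p_r‖ := by
    calc |da eu p_r| ≤ ‖da‖ * ‖eu‖ * ‖p_r‖ := da.le_opNorm₂ eu p_r
      _ ≤ ‖da‖ * Epr * ‖p_r‖ := by gcongr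
  have b6 : |da u_r ep| ≤ ‖da‖ * ‖u_r‖ * Edu := by
    calc |da u_r ep| ≤ ‖da‖ * ‖u_r‖ * ‖ep‖ := da.le_opNorm₂ u_r ep
      _ ≤ ‖da‖ * ‖u_r‖ * Edu := by gcongr
  have b7 : |da eu ep| ≤ ‖da‖ * Epr * Edu := by
    have h1 := mul_le_mul_of_nonneg_left hEu (norm_nonneg da)
    have h2 := mul_le_mul h1 hEp (norm_nonneg ep) (mul_nonneg (norm_nonneg da) hEpr0)
    exact (da.le_opNorm₂ eu ep).trans h2
  clear hu_h hp_h hu_r hp_r ha_coer ha_sym hk_sym hdk_sym hu_r_mem hp_r_mem hVpr hVdu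
  have t4 := abs_sub (dj eu + dk eu eu + 2 * dk eu u_r + dl ep) (da eu p_r + da u_r ep + da eu ep)
  have t1 := abs_add_le (dj eu + dk eu eu + 2 * dk eu u_r) (dl ep)
  have t0 := abs_add_le (dj eu + dk eu eu) (2 * dk eu u_r)
  have t00 := abs_add_le (dj eu) (dk eu eu)
  have t2 := abs_add_le (da eu p_r + da u_r ep) (da eu ep)
  have t3 := abs_add_le (da eu p_r) (da u_r ep)
  have t5 : |2 * dk eu u_r| = 2 * |dk eu u_r| := by rw [abs_mul]; norm_num
  linarith [b1, b2, b3, b4, b5, b6, b7]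
end

section
/- Upper bound on the model reduction error of the adjoint-based gradient component of the NCD-corrected functional: with g_r^c := dΘ + dj(u_r) + dk(u_r, u_r) + dl(p_r + w_r) − da(u_r, p_r + w_r) − (dj(z_r) + 2dk(z_r, u_r) − da(z_r, p_r)), it holds that |g_h − g_r^c| ≤ 2 Δ_pr ‖u_r‖ ‖dk‖ + Δ_pr (‖dj‖ + ‖da‖ ‖p_r‖) + Δ_du (‖dl‖ + ‖da‖ ‖u_r‖) + Δ_pr Δ_du ‖da‖ + Δ_pr² ‖dk‖ + (‖dl‖ + ‖da‖ ‖u_r‖) α⁻¹ (‖r^du(u_r, p_r)‖ + 2‖k‖ α⁻¹ ‖r^pr(u_r)‖) + α⁻¹ ‖r^pr(u_r)‖ (‖dj‖ + 2‖dk‖ ‖u_r‖ + ‖da‖ ‖p_r‖). -/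
private lemma energy_aux {α C x : ℝ} (hα : 0 < α) (hC : 0 ≤ C) (hx : 0 ≤ x)
    (h : α * x ^ 2 ≤ C * x) : x ≤ α⁻¹ * C := by
  rcases eq_or_lt_of_le hx with h0 | h0
  · rw [← h0]; positivity
  · have hαx : α * x ≤ C := by nlinarith
    calc x = α⁻¹ * (α * x) := by field_simp
    _ ≤ α⁻¹ * C := by
        have : (0:ℝ) ≤ α⁻¹ := by positivity
        exact mul_le_mul_of_nonneg_left hαx this

set_option maxHeartbeats 1000000 in
/-- Upper bound on the model reduction error of the adjoint-based gradient component of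
the NCD-corrected functional. -/
theorem stmt_12
    {V : Type*} [NormedAddCommGroup V] [InnerProductSpace ℝ V] [CompleteSpace V]
    (a : V →L[ℝ] V →L[ℝ] ℝ) (l j : V →L[ℝ] ℝ) (k : V →L[ℝ] V →L[ℝ] ℝ)
    (α : ℝ) (hα : 0 < α)
    (ha_sym : ∀ v w : V, a v w = a w v)
    (ha_coer : ∀ v : V, α * ‖v‖ ^ 2 ≤ a v v)
    (hk_sym : ∀ v w : V, k v w = k w v)
    (u_h : V) (hu_h : ∀ v : V, a u_h v = l v)
    (p_h : V) (hp_h : ∀ v : V, a v p_h = j v + 2 * k v u_h)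
    (Vpr Vdu : Submodule ℝ V)
    (hVpr : IsClosed (Vpr : Set V)) (hVdu : IsClosed (Vdu : Set V))
    (u_r : V) (hu_r_mem : u_r ∈ Vpr) (hu_r : ∀ v ∈ Vpr, a u_r v = l v)
    (p_r : V) (hp_r_mem : p_r ∈ Vdu) (hp_r : ∀ q ∈ Vdu, a q p_r = j q + 2 * k q u_r)
    (z_r : V) (hz_r_mem : z_r ∈ Vdu)
    (hz_r : ∀ q ∈ Vdu, a z_r q = -(l q - a u_r q))
    (w_r : V) (hw_r_mem : w_r ∈ Vpr)
    (hw_r : ∀ v ∈ Vpr, a v w_r = (j v + 2 * k v u_r - a v p_r) - 2 * k z_r v)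
    (dΘ : ℝ) (dl dj : V →L[ℝ] ℝ) (da dk : V →L[ℝ] V →L[ℝ] ℝ)
    (hdk_sym : ∀ v w : V, dk v w = dk w v) :
    |(dΘ + dj u_h + dk u_h u_h + dl p_h - da u_h p_h)
        - (dΘ + dj u_r + dk u_r u_r + dl (p_r + w_r) - da u_r (p_r + w_r)
            - (dj z_r + 2 * dk z_r u_r - da z_r p_r))| ≤
      2 * (α⁻¹ * ‖l - a u_r‖) * ‖u_r‖ * ‖dk‖
        + (α⁻¹ * ‖l - a u_r‖) * (‖dj‖ + ‖da‖ * ‖p_r‖)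
        + (α⁻¹ * (2 * ‖k‖ * (α⁻¹ * ‖l - a u_r‖)
            + ‖j + (2 : ℝ) • k.flip u_r - a.flip p_r‖)) * (‖dl‖ + ‖da‖ * ‖u_r‖)
        + (α⁻¹ * ‖l - a u_r‖)
          * (α⁻¹ * (2 * ‖k‖ * (α⁻¹ * ‖l - a u_r‖)
              + ‖j + (2 : ℝ) • k.flip u_r - a.flip p_r‖)) * ‖da‖
        + (α⁻¹ * ‖l - a u_r‖) ^ 2 * ‖dk‖
        + (‖dl‖ + ‖da‖ * ‖u_r‖) * α⁻¹
          * (‖j + (2 : ℝ) • k.flip u_r - a.flip p_r‖ + 2 * ‖k‖ * α⁻¹ * ‖l - a u_r‖)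
        + α⁻¹ * ‖l - a u_r‖ * (‖dj‖ + 2 * ‖dk‖ * ‖u_r‖ + ‖da‖ * ‖p_r‖) := by
  set e := u_h - u_r with he
  set ε := p_h - p_r with hε
  set r : V →L[ℝ] ℝ := l - a u_r with hr
  set R : V →L[ℝ] ℝ := j + (2 : ℝ) • k.flip u_r - a.flip p_r with hR
  set Δ : ℝ := α⁻¹ * ‖r‖ with hΔ
  set Dd : ℝ := α⁻¹ * (2 * ‖k‖ * Δ + ‖R‖) with hDd
  have hr_app : ∀ v : V, r v = l v - a u_r v := by
    intro v; simp [hr]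
  have hR_app : ∀ v : V, R v = j v + 2 * k v u_r - a v p_r := by
    intro v
    simp [hR, ContinuousLinearMap.sub_apply, ContinuousLinearMap.add_apply,
      ContinuousLinearMap.smul_apply, ContinuousLinearMap.flip_apply]
  have hΔ0 : 0 ≤ Δ := by positivity
  -- bound on e
  have h_e : ‖e‖ ≤ Δ := by
    apply energy_aux hα (norm_nonneg _) (norm_nonneg _)
    calc α * ‖e‖ ^ 2 ≤ a e e := ha_coer e
      _ = r e := by
          simp only [he, hr_app, map_sub, ContinuousLinearMap.sub_apply, hu_h]
          ring
      _ ≤ ‖r e‖ := by rw [Real.norm_eq_abs]; exact le_abs_self _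
      _ ≤ ‖r‖ * ‖e‖ := r.le_opNorm e
  -- bound on z_r
  have h_z : ‖z_r‖ ≤ Δ := by
    apply energy_aux hα (norm_nonneg _) (norm_nonneg _)
    calc α * ‖z_r‖ ^ 2 ≤ a z_r z_r := ha_coer z_r
      _ = -(r z_r) := by rw [hz_r z_r hz_r_mem, hr_app]
      _ ≤ ‖r z_r‖ := by rw [Real.norm_eq_abs]; exact neg_le_abs _
      _ ≤ ‖r‖ * ‖z_r‖ := r.le_opNorm z_r
  -- equation for ε
  have hεeq : ∀ v : V, a v ε = R v + 2 * k v e := by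
    intro v
    have := hp_h v
    simp only [hε, he, map_sub, hR_app]
    rw [this]
    ring
  -- bound on ε
  have h_ε : ‖ε‖ ≤ Dd := by
    apply energy_aux hα (by positivity) (norm_nonneg _)
    have h1 : a ε ε = R ε + 2 * k ε e := hεeq ε
    have h2 : R ε ≤ ‖R‖ * ‖ε‖ := by
      calc R ε ≤ ‖R ε‖ := by rw [Real.norm_eq_abs]; exact le_abs_self _
        _ ≤ ‖R‖ * ‖ε‖ := R.le_opNorm ε
    have h3 : k ε e ≤ ‖k‖ * ‖ε‖ * ‖e‖ := by
      calc k ε e ≤ ‖k ε e‖ := by rw [Real.norm_eq_abs]; exact le_abs_self _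
        _ ≤ ‖k‖ * ‖ε‖ * ‖e‖ := k.le_opNorm₂ ε e
    have h4 : ‖k‖ * ‖ε‖ * ‖e‖ ≤ ‖k‖ * ‖ε‖ * Δ :=
      mul_le_mul_of_nonneg_left h_e (by positivity)
    have h5 := ha_coer ε
    nlinarith [h1, h2, h3, h4, h5]
  -- bound on w_r
  have h_w : ‖w_r‖ ≤ Dd := by
    apply energy_aux hα (by positivity) (norm_nonneg _)
    have h1 : a w_r w_r = R w_r - 2 * k z_r w_r := by
      rw [hw_r w_r hw_r_mem, hR_app]
    have h2 : R w_r ≤ ‖R‖ * ‖w_r‖ := by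
      calc R w_r ≤ ‖R w_r‖ := by rw [Real.norm_eq_abs]; exact le_abs_self _
        _ ≤ ‖R‖ * ‖w_r‖ := R.le_opNorm w_r
    have h3 : -(k z_r w_r) ≤ ‖k‖ * ‖z_r‖ * ‖w_r‖ := by
      calc -(k z_r w_r) ≤ ‖k z_r w_r‖ := by rw [Real.norm_eq_abs]; exact neg_le_abs _
        _ ≤ ‖k‖ * ‖z_r‖ * ‖w_r‖ := k.le_opNorm₂ z_r w_r
    have h4 : ‖k‖ * ‖z_r‖ * ‖w_r‖ ≤ ‖k‖ * Δ * ‖w_r‖ := by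
      have := mul_le_mul_of_nonneg_left h_z (norm_nonneg k)
      exact mul_le_mul_of_nonneg_right this (norm_nonneg w_r)
    have h5 := ha_coer w_r
    nlinarith [h1, h2, h3, h4, h5]
  -- key algebraic identity
  have key : (dΘ + dj u_h + dk u_h u_h + dl p_h - da u_h p_h)
        - (dΘ + dj u_r + dk u_r u_r + dl (p_r + w_r) - da u_r (p_r + w_r)
            - (dj z_r + 2 * dk z_r u_r - da z_r p_r))
      = dj e + dk e e + dk e u_r + dk u_r e + dl ε - dl w_r
        - da e ε - da e p_r - da u_r ε + da u_r w_r
        + dj z_r + 2 * dk z_r u_r - da z_r p_r := by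
    simp only [he, hε, map_sub, map_add, ContinuousLinearMap.sub_apply,
      ContinuousLinearMap.add_apply]
    ring
  rw [key]
  -- termwise norm bounds
  have b1 : ‖dj e‖ ≤ ‖dj‖ * ‖e‖ := dj.le_opNorm e
  have b2 : ‖dk e e‖ ≤ ‖dk‖ * ‖e‖ * ‖e‖ := dk.le_opNorm₂ e e
  have b3 : ‖dk e u_r‖ ≤ ‖dk‖ * ‖e‖ * ‖u_r‖ := dk.le_opNorm₂ e u_r
  have b4 : ‖dk u_r e‖ ≤ ‖dk‖ * ‖u_r‖ * ‖e‖ := dk.le_opNorm₂ u_r e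
  have b5 : ‖dl ε‖ ≤ ‖dl‖ * ‖ε‖ := dl.le_opNorm ε
  have b6 : ‖dl w_r‖ ≤ ‖dl‖ * ‖w_r‖ := dl.le_opNorm w_r
  have b7 : ‖da e ε‖ ≤ ‖da‖ * ‖e‖ * ‖ε‖ := da.le_opNorm₂ e ε
  have b8 : ‖da e p_r‖ ≤ ‖da‖ * ‖e‖ * ‖p_r‖ := da.le_opNorm₂ e p_r
  have b9 : ‖da u_r ε‖ ≤ ‖da‖ * ‖u_r‖ * ‖ε‖ := da.le_opNorm₂ u_r ε
  have b10 : ‖da u_r w_r‖ ≤ ‖da‖ * ‖u_r‖ * ‖w_r‖ := da.le_opNorm₂ u_r w_r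
  have b11 : ‖dj z_r‖ ≤ ‖dj‖ * ‖z_r‖ := dj.le_opNorm z_r
  have b12 : ‖dk z_r u_r‖ ≤ ‖dk‖ * ‖z_r‖ * ‖u_r‖ := dk.le_opNorm₂ z_r u_r
  have b13 : ‖da z_r p_r‖ ≤ ‖da‖ * ‖z_r‖ * ‖p_r‖ := da.le_opNorm₂ z_r p_r
  simp only [Real.norm_eq_abs] at b1 b2 b3 b4 b5 b6 b7 b8 b9 b10 b11 b12 b13
  have c1 := abs_le.mp b1; have c2 := abs_le.mp b2; have c3 := abs_le.mp b3
  have c4 := abs_le.mp b4; have c5 := abs_le.mp b5; have c6 := abs_le.mp b6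
  have c7 := abs_le.mp b7; have c8 := abs_le.mp b8; have c9 := abs_le.mp b9
  have c10 := abs_le.mp b10; have c11 := abs_le.mp b11
  have c12 := abs_le.mp b12; have c13 := abs_le.mp b13
  have tri : |dj e + dk e e + dk e u_r + dk u_r e + dl ε - dl w_r
        - da e ε - da e p_r - da u_r ε + da u_r w_r
        + dj z_r + 2 * dk z_r u_r - da z_r p_r|
      ≤ ‖dj‖ * ‖e‖ + ‖dk‖ * ‖e‖ * ‖e‖ + ‖dk‖ * ‖e‖ * ‖u_r‖ + ‖dk‖ * ‖u_r‖ * ‖e‖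
        + ‖dl‖ * ‖ε‖ + ‖dl‖ * ‖w_r‖ + ‖da‖ * ‖e‖ * ‖ε‖ + ‖da‖ * ‖e‖ * ‖p_r‖
        + ‖da‖ * ‖u_r‖ * ‖ε‖ + ‖da‖ * ‖u_r‖ * ‖w_r‖
        + ‖dj‖ * ‖z_r‖ + 2 * (‖dk‖ * ‖z_r‖ * ‖u_r‖) + ‖da‖ * ‖z_r‖ * ‖p_r‖ := by
    rw [abs_le]
    constructor <;> linarith [c1.1, c1.2, c2.1, c2.2, c3.1, c3.2,
        c4.1, c4.2, c5.1, c5.2, c6.1, c6.2, c7.1, c7.2, c8.1, c8.2, c9.1, c9.2,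
        c10.1, c10.2, c11.1, c11.2, c12.1, c12.2, c13.1, c13.2]
  refine tri.trans ?_
  calc ‖dj‖ * ‖e‖ + ‖dk‖ * ‖e‖ * ‖e‖ + ‖dk‖ * ‖e‖ * ‖u_r‖ + ‖dk‖ * ‖u_r‖ * ‖e‖
        + ‖dl‖ * ‖ε‖ + ‖dl‖ * ‖w_r‖ + ‖da‖ * ‖e‖ * ‖ε‖ + ‖da‖ * ‖e‖ * ‖p_r‖
        + ‖da‖ * ‖u_r‖ * ‖ε‖ + ‖da‖ * ‖u_r‖ * ‖w_r‖
        + ‖dj‖ * ‖z_r‖ + 2 * (‖dk‖ * ‖z_r‖ * ‖u_r‖) + ‖da‖ * ‖z_r‖ * ‖p_r‖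
      ≤ ‖dj‖ * Δ + ‖dk‖ * Δ * Δ + ‖dk‖ * Δ * ‖u_r‖ + ‖dk‖ * ‖u_r‖ * Δ
        + ‖dl‖ * Dd + ‖dl‖ * Dd + ‖da‖ * Δ * Dd + ‖da‖ * Δ * ‖p_r‖
        + ‖da‖ * ‖u_r‖ * Dd + ‖da‖ * ‖u_r‖ * Dd
        + ‖dj‖ * Δ + 2 * (‖dk‖ * Δ * ‖u_r‖) + ‖da‖ * Δ * ‖p_r‖ := by
        gcongr <;> first | exact h_e | exact h_z | exact h_ε | exact h_w
    _ = 2 * Δ * ‖u_r‖ * ‖dk‖ + Δ * (‖dj‖ + ‖da‖ * ‖p_r‖) + Dd * (‖dl‖ + ‖da‖ * ‖u_r‖)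
        + Δ * Dd * ‖da‖ + Δ ^ 2 * ‖dk‖
        + (‖dl‖ + ‖da‖ * ‖u_r‖) * α⁻¹ * (‖R‖ + 2 * ‖k‖ * α⁻¹ * ‖r‖)
        + α⁻¹ * ‖r‖ * (‖dj‖ + 2 * ‖dk‖ * ‖u_r‖ + ‖da‖ * ‖p_r‖) := by
        rw [hDd, hΔ]; ring
end

section
/- Equivalence of the adjoint-based and sensitivity-based representations of the gradient of the NCD-corrected RB reduced functional: r^pr(u_r)[dp_r] + r^du(u_r, p_r)[du_r] = dl(w_r) − da(u_r, w_r) − (dj(z_r) + 2dk(z_r, u_r) − da(z_r, p_r)); consequently the gradient component dΘ + dj(u_r) + dk(u_r, u_r) + dl(p_r) − da(u_r, p_r) + r^pr(u_r)[dp_r] + r^du(u_r, p_r)[du_r] computed via sensitivities coincides with the adjoint-based component dΘ + dj(u_r) + dk(u_r, u_r) + dl(p_r + w_r) − da(u_r, p_r + w_r) − (dj(z_r) + 2dk(z_r, u_r) − da(z_r, p_r)). -/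
/-- Equivalence of the adjoint-based and sensitivity-based representations of the
gradient of the NCD-corrected RB reduced functional. -/
theorem stmt_14
    {V : Type*} [NormedAddCommGroup V] [InnerProductSpace ℝ V] [CompleteSpace V]
    (a : V →L[ℝ] V →L[ℝ] ℝ) (l j : V →L[ℝ] ℝ) (k : V →L[ℝ] V →L[ℝ] ℝ)
    (α : ℝ) (hα : 0 < α)
    (ha_sym : ∀ v w : V, a v w = a w v)
    (ha_coer : ∀ v : V, α * ‖v‖ ^ 2 ≤ a v v)
    (hk_sym : ∀ v w : V, k v w = k w v)
    (Vpr Vdu : Submodule ℝ V)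
    (hVpr : IsClosed (Vpr : Set V)) (hVdu : IsClosed (Vdu : Set V))
    (u_r : V) (hu_r_mem : u_r ∈ Vpr)
    (p_r : V) (hp_r_mem : p_r ∈ Vdu)
    (dΘ : ℝ) (dl dj : V →L[ℝ] ℝ) (da dk : V →L[ℝ] V →L[ℝ] ℝ)
    (hdk_sym : ∀ v w : V, dk v w = dk w v)
    (z_r : V) (hz_r_mem : z_r ∈ Vdu)
    (hz_r : ∀ q ∈ Vdu, a z_r q = -(l q - a u_r q))
    (w_r : V) (hw_r_mem : w_r ∈ Vpr)
    (hw_r : ∀ v ∈ Vpr, a v w_r = (j v + 2 * k v u_r - a v p_r) - 2 * k z_r v)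
    (du_r : V) (hdu_r_mem : du_r ∈ Vpr)
    (hdu_r : ∀ v ∈ Vpr, a du_r v = dl v - da u_r v)
    (dp_r : V) (hdp_r_mem : dp_r ∈ Vdu)
    (hdp_r : ∀ q ∈ Vdu, a q dp_r = dj q + 2 * dk q u_r - da q p_r + 2 * k q du_r) :
    (l dp_r - a u_r dp_r) + (j du_r + 2 * k du_r u_r - a du_r p_r)
      = dl w_r - da u_r w_r - (dj z_r + 2 * dk z_r u_r - da z_r p_r) ∧
    dΘ + dj u_r + dk u_r u_r + dl p_r - da u_r p_r
        + (l dp_r - a u_r dp_r) + (j du_r + 2 * k du_r u_r - a du_r p_r)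
      = dΘ + dj u_r + dk u_r u_r + dl (p_r + w_r) - da u_r (p_r + w_r)
          - (dj z_r + 2 * dk z_r u_r - da z_r p_r) := by
  have h1 := hz_r dp_r hdp_r_mem
  have h2 := hdp_r z_r hz_r_mem
  have h3 := hw_r du_r hdu_r_mem
  have h4 := hdu_r w_r hw_r_mem
  have h5 : k du_r z_r = k z_r du_r := hk_sym _ _
  have hfst : (l dp_r - a u_r dp_r) + (j du_r + 2 * k du_r u_r - a du_r p_r)
      = dl w_r - da u_r w_r - (dj z_r + 2 * dk z_r u_r - da z_r p_r) := by
    linarith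
  refine ⟨hfst, ?_⟩
  have e1 : dl (p_r + w_r) = dl p_r + dl w_r := map_add _ _ _
  have e2 : da u_r (p_r + w_r) = da u_r p_r + da u_r w_r := map_add _ _ _
  linarith
end

section
/- Residual-based upper bound on the model reduction error of the dual sensitivity: ‖dp_h − dp_r‖ ≤ α⁻¹ (2‖dk‖ Δ_pr + ‖da‖ Δ_du + 2‖k‖ Δ_dpr + ‖r^{du,d}(u_r, p_r, du_r, dp_r)‖). -/
set_option maxHeartbeats 1000000

lemma coer_bound {V : Type*} [NormedAddCommGroup V] [InnerProductSpace ℝ V]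
    (α : ℝ) (hα : 0 < α) (e : V) (C aee : ℝ) (hC : 0 ≤ C)
    (hcoer : α * ‖e‖ ^ 2 ≤ aee) (hub : aee ≤ C * ‖e‖) :
    ‖e‖ ≤ α⁻¹ * C := by
  rw [le_inv_mul_iff₀ hα]
  nlinarith [norm_nonneg e, sq_nonneg (‖e‖)]

/-- Residual-based upper bound on the model reduction error of the dual sensitivity:
`‖dp_h − dp_r‖ ≤ α⁻¹ (2‖dk‖ Δ_pr + ‖da‖ Δ_du + 2‖k‖ Δ_dpr + ‖r^{du,d}(u_r,p_r,du_r,dp_r)‖)`. -/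
theorem stmt_16
    {V : Type*} [NormedAddCommGroup V] [InnerProductSpace ℝ V] [CompleteSpace V]
    (a : V →L[ℝ] V →L[ℝ] ℝ) (l j : V →L[ℝ] ℝ) (k : V →L[ℝ] V →L[ℝ] ℝ)
    (α : ℝ) (hα : 0 < α)
    (ha_sym : ∀ v w : V, a v w = a w v)
    (ha_coer : ∀ v : V, α * ‖v‖ ^ 2 ≤ a v v)
    (hk_sym : ∀ v w : V, k v w = k w v)
    (u_h : V) (hu_h : ∀ v : V, a u_h v = l v)
    (p_h : V) (hp_h : ∀ v : V, a v p_h = j v + 2 * k v u_h)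
    (Vpr Vdu : Submodule ℝ V)
    (hVpr : IsClosed (Vpr : Set V)) (hVdu : IsClosed (Vdu : Set V))
    (u_r : V) (hu_r_mem : u_r ∈ Vpr) (hu_r : ∀ v ∈ Vpr, a u_r v = l v)
    (p_r : V) (hp_r_mem : p_r ∈ Vdu) (hp_r : ∀ q ∈ Vdu, a q p_r = j q + 2 * k q u_r)
    (dl dj : V →L[ℝ] ℝ) (da dk : V →L[ℝ] V →L[ℝ] ℝ)
    (hdk_sym : ∀ v w : V, dk v w = dk w v)
    (du_h : V) (hdu_h : ∀ v : V, a du_h v = dl v - da u_h v)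
    (Wpr : Submodule ℝ V) (hWpr : IsClosed (Wpr : Set V))
    (du_r : V) (hdu_r_mem : du_r ∈ Wpr)
    (hdu_r : ∀ v ∈ Wpr, a du_r v = dl v - da u_r v)
    (dp_h : V)
    (hdp_h : ∀ q : V, a q dp_h = dj q + 2 * dk q u_h - da q p_h + 2 * k q du_h)
    (Wdu : Submodule ℝ V) (hWdu : IsClosed (Wdu : Set V))
    (dp_r : V) (hdp_r_mem : dp_r ∈ Wdu)
    (hdp_r : ∀ q ∈ Wdu, a q dp_r = dj q + 2 * dk q u_r - da q p_r + 2 * k q du_r) :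
    ‖dp_h - dp_r‖ ≤
      α⁻¹ * (2 * ‖dk‖ * (α⁻¹ * ‖l - a u_r‖)
        + ‖da‖ * (α⁻¹ * (2 * ‖k‖ * (α⁻¹ * ‖l - a u_r‖)
            + ‖j + (2 : ℝ) • k.flip u_r - a.flip p_r‖))
        + 2 * ‖k‖ * (α⁻¹ * (‖da‖ * (α⁻¹ * ‖l - a u_r‖) + ‖dl - da u_r - a du_r‖))
        + ‖dj + (2 : ℝ) • dk.flip u_r - da.flip p_r + (2 : ℝ) • k.flip du_r
            - a.flip dp_r‖) := by
  have hαinv : (0:ℝ) ≤ α⁻¹ := le_of_lt (inv_pos.2 hα)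
  have lin_abs : ∀ (f : V →L[ℝ] ℝ) (x : V), |f x| ≤ ‖f‖ * ‖x‖ := fun f x => by
    simpa [Real.norm_eq_abs] using f.le_opNorm x
  have bil_abs : ∀ (b : V →L[ℝ] V →L[ℝ] ℝ) (x y : V), |b x y| ≤ ‖b‖ * ‖x‖ * ‖y‖ :=
    fun b x y => by simpa [Real.norm_eq_abs] using b.le_opNorm₂ x y
  -- primal error
  have hE1 : ‖u_h - u_r‖ ≤ α⁻¹ * ‖l - a u_r‖ := by
    refine coer_bound α hα _ _ _ (by positivity) (ha_coer _) ?_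
    have heq : a (u_h - u_r) (u_h - u_r) = (l - a u_r) (u_h - u_r) := by
      simp [map_sub, ContinuousLinearMap.sub_apply, hu_h]
    rw [heq]
    exact le_trans (le_abs_self _) (lin_abs _ _)
  -- dual error
  have hE2 : ‖p_h - p_r‖ ≤ α⁻¹ * (2 * ‖k‖ * ‖u_h - u_r‖
      + ‖j + (2 : ℝ) • k.flip u_r - a.flip p_r‖) := by
    refine coer_bound α hα _ _ _ (by positivity) (ha_coer _) ?_
    have heq : a (p_h - p_r) (p_h - p_r) =
        (j + (2 : ℝ) • k.flip u_r - a.flip p_r) (p_h - p_r)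
          + 2 * k (p_h - p_r) (u_h - u_r) := by
      have h1 := hp_h (p_h - p_r)
      simp only [map_sub, ContinuousLinearMap.sub_apply, ContinuousLinearMap.add_apply,
        ContinuousLinearMap.smul_apply, ContinuousLinearMap.flip_apply, smul_eq_mul] at *
      ring_nf
      linarith [h1]
    rw [heq]
    have h2 := abs_le.1 (lin_abs (j + (2 : ℝ) • k.flip u_r - a.flip p_r) (p_h - p_r))
    have h3 := abs_le.1 (bil_abs k (p_h - p_r) (u_h - u_r))
    ring_nf at h2 h3 ⊢
    linarith
  -- primal sensitivity error
  have hE3 : ‖du_h - du_r‖ ≤ α⁻¹ * (‖da‖ * ‖u_h - u_r‖ + ‖dl - da u_r - a du_r‖) := by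
    refine coer_bound α hα _ _ _ (by positivity) (ha_coer _) ?_
    have heq : a (du_h - du_r) (du_h - du_r) =
        (dl - da u_r - a du_r) (du_h - du_r) - da (u_h - u_r) (du_h - du_r) := by
      have h1 := hdu_h (du_h - du_r)
      simp only [map_sub, ContinuousLinearMap.sub_apply] at *
      linarith [h1]
    rw [heq]
    have h2 := abs_le.1 (lin_abs (dl - da u_r - a du_r) (du_h - du_r))
    have h3 := abs_le.1 (bil_abs da (u_h - u_r) (du_h - du_r))
    ring_nf at h2 h3 ⊢
    linarith
  -- dual sensitivity error
  have hE4 : ‖dp_h - dp_r‖ ≤ α⁻¹ * (2 * ‖dk‖ * ‖u_h - u_r‖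
      + ‖da‖ * ‖p_h - p_r‖ + 2 * ‖k‖ * ‖du_h - du_r‖
      + ‖dj + (2 : ℝ) • dk.flip u_r - da.flip p_r + (2 : ℝ) • k.flip du_r
          - a.flip dp_r‖) := by
    refine coer_bound α hα _ _ _ (by positivity) (ha_coer _) ?_
    have heq : a (dp_h - dp_r) (dp_h - dp_r) =
        (dj + (2 : ℝ) • dk.flip u_r - da.flip p_r + (2 : ℝ) • k.flip du_r
          - a.flip dp_r) (dp_h - dp_r)
        + 2 * dk (dp_h - dp_r) (u_h - u_r)
        - da (dp_h - dp_r) (p_h - p_r)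
        + 2 * k (dp_h - dp_r) (du_h - du_r) := by
      have h1 := hdp_h (dp_h - dp_r)
      simp only [map_sub, ContinuousLinearMap.sub_apply, ContinuousLinearMap.add_apply,
        ContinuousLinearMap.smul_apply, ContinuousLinearMap.flip_apply, smul_eq_mul] at *
      ring_nf
      linarith [h1]
    rw [heq]
    have h2 := abs_le.1 (lin_abs (dj + (2 : ℝ) • dk.flip u_r - da.flip p_r
      + (2 : ℝ) • k.flip du_r - a.flip dp_r) (dp_h - dp_r))
    have h3 := abs_le.1 (bil_abs dk (dp_h - dp_r) (u_h - u_r))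
    have h4 := abs_le.1 (bil_abs da (dp_h - dp_r) (p_h - p_r))
    have h5 := abs_le.1 (bil_abs k (dp_h - dp_r) (du_h - du_r))
    ring_nf at h2 h3 h4 h5 ⊢
    linarith
  refine hE4.trans ?_
  gcongr
  · exact hE2.trans (by gcongr)
  · exact hE3.trans (by gcongr)
end

section
/- Higher-order upper bound on the model reduction error of the sensitivity-based gradient component of the NCD-corrected functional: with g_r^s := dΘ + dj(u_r) + dk(u_r, u_r) + dl(p_r) − da(u_r, p_r) + r^pr(u_r)[dp_r] + r^du(u_r, p_r)[du_r], it holds that |g_h − g_r^s| ≤ ‖dk‖ Δ_pr² + ‖a‖ Δ_dpr Δ_du + ‖r^{du,d}(u_r, p_r, du_r, dp_r)‖ Δ_pr. -/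
private lemma aux_norm_le {V : Type*} [NormedAddCommGroup V]
    {α C : ℝ} (hα : 0 < α) (hC : 0 ≤ C) (v : V) (h : α * ‖v‖ ^ 2 ≤ C * ‖v‖) :
    ‖v‖ ≤ α⁻¹ * C := by
  rcases eq_or_ne v 0 with rfl | hv
  · simpa using by positivity
  · have hv' : 0 < ‖v‖ := norm_pos_iff.mpr hv
    rw [le_inv_mul_iff₀ hα]
    nlinarith

private lemma key_id {V : Type*} [NormedAddCommGroup V] [InnerProductSpace ℝ V]
    (a : V →L[ℝ] V →L[ℝ] ℝ) (l j : V →L[ℝ] ℝ) (k : V →L[ℝ] V →L[ℝ] ℝ)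
    (hk_sym : ∀ v w : V, k v w = k w v)
    (u_h : V) (hu_h : ∀ v : V, a u_h v = l v)
    (p_h : V) (hp_h : ∀ v : V, a v p_h = j v + 2 * k v u_h)
    (u_r p_r : V)
    (dΘ : ℝ) (dl dj : V →L[ℝ] ℝ) (da dk : V →L[ℝ] V →L[ℝ] ℝ)
    (hdk_sym : ∀ v w : V, dk v w = dk w v)
    (du_h : V) (hdu_h : ∀ v : V, a du_h v = dl v - da u_h v)
    (du_r dp_r : V) :
    (dΘ + dj u_h + dk u_h u_h + dl p_h - da u_h p_h)
        - (dΘ + dj u_r + dk u_r u_r + dl p_r - da u_r p_r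
            + (l dp_r - a u_r dp_r) + (j du_r + 2 * k du_r u_r - a du_r p_r))
      = (dj + (2 : ℝ) • dk.flip u_r - da.flip p_r + (2 : ℝ) • k.flip du_r
          - a.flip dp_r) (u_h - u_r)
        + dk (u_h - u_r) (u_h - u_r) + a (du_h - du_r) (p_h - p_r) := by
  simp only [ContinuousLinearMap.add_apply, ContinuousLinearMap.sub_apply,
    ContinuousLinearMap.smul_apply, ContinuousLinearMap.flip_apply, smul_eq_mul,
    map_sub]
  rw [hu_h dp_r, hdu_h p_h, hdu_h p_r, hp_h du_r, hk_sym u_r du_r, hdk_sym u_r u_h,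
    hk_sym u_h du_r]
  ring




/-- Higher-order upper bound on the model reduction error of the sensitivity-based
gradient component of the NCD-corrected functional:
`|g_h − g_r^s| ≤ ‖dk‖ Δ_pr² + ‖a‖ Δ_dpr Δ_du + ‖r^{du,d}(u_r,p_r,du_r,dp_r)‖ Δ_pr`. -/
theorem stmt_17
    {V : Type*} [NormedAddCommGroup V] [InnerProductSpace ℝ V] [CompleteSpace V]
    (a : V →L[ℝ] V →L[ℝ] ℝ) (l j : V →L[ℝ] ℝ) (k : V →L[ℝ] V →L[ℝ] ℝ)
    (α : ℝ) (hα : 0 < α)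
    (ha_sym : ∀ v w : V, a v w = a w v)
    (ha_coer : ∀ v : V, α * ‖v‖ ^ 2 ≤ a v v)
    (hk_sym : ∀ v w : V, k v w = k w v)
    (u_h : V) (hu_h : ∀ v : V, a u_h v = l v)
    (p_h : V) (hp_h : ∀ v : V, a v p_h = j v + 2 * k v u_h)
    (Vpr Vdu : Submodule ℝ V)
    (hVpr : IsClosed (Vpr : Set V)) (hVdu : IsClosed (Vdu : Set V))
    (u_r : V) (hu_r_mem : u_r ∈ Vpr) (hu_r : ∀ v ∈ Vpr, a u_r v = l v)
    (p_r : V) (hp_r_mem : p_r ∈ Vdu) (hp_r : ∀ q ∈ Vdu, a q p_r = j q + 2 * k q u_r)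
    (dΘ : ℝ) (dl dj : V →L[ℝ] ℝ) (da dk : V →L[ℝ] V →L[ℝ] ℝ)
    (hdk_sym : ∀ v w : V, dk v w = dk w v)
    (du_h : V) (hdu_h : ∀ v : V, a du_h v = dl v - da u_h v)
    (Wpr Wdu : Submodule ℝ V)
    (hWpr : IsClosed (Wpr : Set V)) (hWdu : IsClosed (Wdu : Set V))
    (du_r : V) (hdu_r_mem : du_r ∈ Wpr)
    (hdu_r : ∀ v ∈ Wpr, a du_r v = dl v - da u_r v)
    (dp_r : V) (hdp_r_mem : dp_r ∈ Wdu)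
    (hdp_r : ∀ q ∈ Wdu, a q dp_r = dj q + 2 * dk q u_r - da q p_r + 2 * k q du_r) :
    |(dΘ + dj u_h + dk u_h u_h + dl p_h - da u_h p_h)
        - (dΘ + dj u_r + dk u_r u_r + dl p_r - da u_r p_r
            + (l dp_r - a u_r dp_r) + (j du_r + 2 * k du_r u_r - a du_r p_r))| ≤
      ‖dk‖ * (α⁻¹ * ‖l - a u_r‖) ^ 2
        + ‖a‖ * (α⁻¹ * (‖da‖ * (α⁻¹ * ‖l - a u_r‖) + ‖dl - da u_r - a du_r‖))
          * (α⁻¹ * (2 * ‖k‖ * (α⁻¹ * ‖l - a u_r‖)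
              + ‖j + (2 : ℝ) • k.flip u_r - a.flip p_r‖))
        + ‖dj + (2 : ℝ) • dk.flip u_r - da.flip p_r + (2 : ℝ) • k.flip du_r
            - a.flip dp_r‖ * (α⁻¹ * ‖l - a u_r‖) := by
  set rdud : V →L[ℝ] ℝ := dj + (2 : ℝ) • dk.flip u_r - da.flip p_r + (2 : ℝ) • k.flip du_r
      - a.flip dp_r with hrdud
  set rdu : V →L[ℝ] ℝ := j + (2 : ℝ) • k.flip u_r - a.flip p_r with hrdu
  set rpr : V →L[ℝ] ℝ := l - a u_r with hrpr
  set rprd : V →L[ℝ] ℝ := dl - da u_r - a du_r with hrprd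
  set e : V := u_h - u_r with he_def
  set ep : V := p_h - p_r with hep_def
  set ed : V := du_h - du_r with hed_def
  -- the key algebraic identity
  have key : (dΘ + dj u_h + dk u_h u_h + dl p_h - da u_h p_h)
        - (dΘ + dj u_r + dk u_r u_r + dl p_r - da u_r p_r
            + (l dp_r - a u_r dp_r) + (j du_r + 2 * k du_r u_r - a du_r p_r))
      = rdud e + dk e e + a ed ep :=
    key_id a l j k hk_sym u_h hu_h p_h hp_h u_r p_r dΘ dl dj da dk hdk_sym
      du_h hdu_h du_r dp_r
  -- primal error bound
  have hae : ∀ v : V, a e v = rpr v := by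
    intro v
    simp [he_def, hrpr, map_sub, ContinuousLinearMap.sub_apply, hu_h v]
  have hbnd : ∀ (f : V →L[ℝ] ℝ) (v : V), |f v| ≤ ‖f‖ * ‖v‖ := by
    intro f v
    have := f.le_opNorm v
    rwa [Real.norm_eq_abs] at this
  have hbnd2 : ∀ (b : V →L[ℝ] V →L[ℝ] ℝ) (v w : V), |b v w| ≤ ‖b‖ * ‖v‖ * ‖w‖ := by
    intro b v w
    have := b.le_opNorm₂ v w
    rwa [Real.norm_eq_abs] at this
  have hDpr : ‖e‖ ≤ α⁻¹ * ‖rpr‖ := by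
    refine aux_norm_le hα (norm_nonneg _) e ?_
    calc α * ‖e‖ ^ 2 ≤ a e e := ha_coer e
      _ = rpr e := hae e
      _ ≤ ‖rpr‖ * ‖e‖ := le_trans (le_abs_self _) (hbnd rpr e)
  have hDpr0 : 0 ≤ α⁻¹ * ‖rpr‖ := by positivity
  have he0 : (0:ℝ) ≤ ‖e‖ := norm_nonneg _
  -- dual error bound
  have haep : ∀ v : V, a v ep = rdu v + 2 * k v e := by
    intro v
    simp only [hep_def, hrdu, he_def, map_sub, ContinuousLinearMap.sub_apply,
      ContinuousLinearMap.add_apply, ContinuousLinearMap.smul_apply,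
      ContinuousLinearMap.flip_apply, smul_eq_mul, (a v).map_sub, (k v).map_sub]
    rw [hp_h v]
    ring
  have hDdu : ‖ep‖ ≤ α⁻¹ * (2 * ‖k‖ * (α⁻¹ * ‖rpr‖) + ‖rdu‖) := by
    refine aux_norm_le hα (by positivity) ep ?_
    have h1 : a ep ep = rdu ep + 2 * k ep e := haep ep
    have h2 := hbnd rdu ep
    have h3 := hbnd2 k ep e
    have h4 : ‖k‖ * ‖ep‖ * ‖e‖ ≤ ‖k‖ * ‖ep‖ * (α⁻¹ * ‖rpr‖) := by
      have : (0:ℝ) ≤ ‖k‖ * ‖ep‖ := by positivity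
      exact mul_le_mul_of_nonneg_left hDpr this
    have h5 := le_abs_self (rdu ep)
    have h6 := le_abs_self (k ep e)
    calc α * ‖ep‖ ^ 2 ≤ a ep ep := ha_coer ep
      _ = rdu ep + 2 * k ep e := h1
      _ ≤ ‖rdu‖ * ‖ep‖ + 2 * (‖k‖ * ‖ep‖ * (α⁻¹ * ‖rpr‖)) := by linarith
      _ = (2 * ‖k‖ * (α⁻¹ * ‖rpr‖) + ‖rdu‖) * ‖ep‖ := by ring
  -- sensitivity error bound
  have haed : ∀ v : V, a ed v = rprd v - da e v := by
    intro v
    simp only [hed_def, hrprd, he_def, map_sub, ContinuousLinearMap.sub_apply]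
    rw [hdu_h v]
    ring
  have hDdpr : ‖ed‖ ≤ α⁻¹ * (‖da‖ * (α⁻¹ * ‖rpr‖) + ‖rprd‖) := by
    refine aux_norm_le hα (by positivity) ed ?_
    have h1 : a ed ed = rprd ed - da e ed := haed ed
    have h2 := hbnd rprd ed
    have h3 := hbnd2 da e ed
    have h4 : ‖da‖ * ‖e‖ * ‖ed‖ ≤ ‖da‖ * (α⁻¹ * ‖rpr‖) * ‖ed‖ :=
      mul_le_mul_of_nonneg_right
        (mul_le_mul_of_nonneg_left hDpr (by positivity)) (by positivity)
    have h5 := le_abs_self (rprd ed)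
    have h6 := neg_abs_le (da e ed)
    calc α * ‖ed‖ ^ 2 ≤ a ed ed := ha_coer ed
      _ = rprd ed - da e ed := h1
      _ ≤ ‖rprd‖ * ‖ed‖ + ‖da‖ * (α⁻¹ * ‖rpr‖) * ‖ed‖ := by linarith
      _ = (‖da‖ * (α⁻¹ * ‖rpr‖) + ‖rprd‖) * ‖ed‖ := by ring
  -- assemble
  rw [key]
  have b1 := hbnd rdud e
  have b2 := hbnd2 dk e e
  have b3 := hbnd2 a ed ep
  have habs : |rdud e + dk e e + a ed ep| ≤ |rdud e| + |dk e e| + |a ed ep| := by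
    calc |rdud e + dk e e + a ed ep| ≤ |rdud e + dk e e| + |a ed ep| := abs_add_le _ _
      _ ≤ |rdud e| + |dk e e| + |a ed ep| := by
          have := abs_add_le (rdud e) (dk e e); linarith
  have step : |rdud e| + |dk e e| + |a ed ep|
      ≤ ‖dk‖ * ‖e‖ ^ 2 + ‖a‖ * ‖ed‖ * ‖ep‖ + ‖rdud‖ * ‖e‖ := by
    have hsq : ‖dk‖ * ‖e‖ ^ 2 = ‖dk‖ * ‖e‖ * ‖e‖ := by ring
    linarith [b1, b2, b3]
  have final : ‖dk‖ * ‖e‖ ^ 2 + ‖a‖ * ‖ed‖ * ‖ep‖ + ‖rdud‖ * ‖e‖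
      ≤ ‖dk‖ * (α⁻¹ * ‖rpr‖) ^ 2
        + ‖a‖ * (α⁻¹ * (‖da‖ * (α⁻¹ * ‖rpr‖) + ‖rprd‖))
          * (α⁻¹ * (2 * ‖k‖ * (α⁻¹ * ‖rpr‖) + ‖rdu‖))
        + ‖rdud‖ * (α⁻¹ * ‖rpr‖) := by
    have t1 : ‖dk‖ * ‖e‖ ^ 2 ≤ ‖dk‖ * (α⁻¹ * ‖rpr‖) ^ 2 :=
      mul_le_mul_of_nonneg_left (pow_le_pow_left₀ he0 hDpr 2) (by positivity)
    have t2 : ‖a‖ * ‖ed‖ * ‖ep‖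
        ≤ ‖a‖ * (α⁻¹ * (‖da‖ * (α⁻¹ * ‖rpr‖) + ‖rprd‖))
          * (α⁻¹ * (2 * ‖k‖ * (α⁻¹ * ‖rpr‖) + ‖rdu‖)) :=
      mul_le_mul (mul_le_mul_of_nonneg_left hDdpr (by positivity)) hDdu
        (by positivity) (by positivity)
    have t3 : ‖rdud‖ * ‖e‖ ≤ ‖rdud‖ * (α⁻¹ * ‖rpr‖) :=
      mul_le_mul_of_nonneg_left hDpr (by positivity)
    linarith
  linarith
end

section
/- Exact representation of the gradient model reduction error for the sensitivity-based NCD-corrected gradient: with e^pr := u_h − u_r, e^du := p_h − p_r and g_r^s := dΘ + dj(u_r) + dk(u_r, u_r) + dl(p_r) − da(u_r, p_r) + r^pr(u_r)[dp_r] + r^du(u_r, p_r)[du_r], it holds that g_h − g_r^s = dk(e^pr, e^pr) + a(du_h − du_r, e^du) + r^{du,d}(u_r, p_r, du_r, dp_r)[e^pr]. -/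
/-- Exact representation of the gradient model reduction error for the
sensitivity-based NCD-corrected gradient: with `e^pr := u_h − u_r`, `e^du := p_h − p_r`,
`g_h − g_r^s = dk(e^pr, e^pr) + a(du_h − du_r, e^du) + r^{du,d}(u_r,p_r,du_r,dp_r)[e^pr]`. -/
theorem stmt_18
    {V : Type*} [NormedAddCommGroup V] [InnerProductSpace ℝ V] [CompleteSpace V]
    (a : V →L[ℝ] V →L[ℝ] ℝ) (l j : V →L[ℝ] ℝ) (k : V →L[ℝ] V →L[ℝ] ℝ)
    (α : ℝ) (hα : 0 < α)
    (ha_sym : ∀ v w : V, a v w = a w v)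
    (ha_coer : ∀ v : V, α * ‖v‖ ^ 2 ≤ a v v)
    (hk_sym : ∀ v w : V, k v w = k w v)
    (u_h : V) (hu_h : ∀ v : V, a u_h v = l v)
    (p_h : V) (hp_h : ∀ v : V, a v p_h = j v + 2 * k v u_h)
    (dΘ : ℝ) (dl dj : V →L[ℝ] ℝ) (da dk : V →L[ℝ] V →L[ℝ] ℝ)
    (hdk_sym : ∀ v w : V, dk v w = dk w v)
    (du_h : V) (hdu_h : ∀ v : V, a du_h v = dl v - da u_h v)
    (u_r p_r du_r dp_r : V) :
    (dΘ + dj u_h + dk u_h u_h + dl p_h - da u_h p_h)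
        - (dΘ + dj u_r + dk u_r u_r + dl p_r - da u_r p_r
            + (l dp_r - a u_r dp_r) + (j du_r + 2 * k du_r u_r - a du_r p_r)) =
      dk (u_h - u_r) (u_h - u_r) + a (du_h - du_r) (p_h - p_r)
        + (dj (u_h - u_r) + 2 * dk (u_h - u_r) u_r - da (u_h - u_r) p_r
            + 2 * k (u_h - u_r) du_r - a (u_h - u_r) dp_r) := by
  have e1 : a du_h p_h = dl p_h - da u_h p_h := hdu_h p_h
  have e2 : a du_h p_r = dl p_r - da u_h p_r := hdu_h p_r
  have e3 : a du_r p_h = j du_r + 2 * k du_r u_h := hp_h du_r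
  have e4 : a u_h dp_r = l dp_r := hu_h dp_r
  simp only [map_sub, ContinuousLinearMap.sub_apply] at *
  have s1 : dk u_r u_h = dk u_h u_r := hdk_sym u_r u_h
  have s2 : k u_h du_r = k du_r u_h := hk_sym u_h du_r
  have s3 : k u_r du_r = k du_r u_r := hk_sym u_r du_r
  linarith
end
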